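/- arXiv:1407.6232 — 10 statements merged into one kernel-verified Lean document; each statement's English description precedes it below -/
import Mathlib

section
/- Let N ≥ 3 be an integer, let a, c > 0 and b ≥ 0 be real numbers, set θ := (b + √(b² + 4ac))/(2c) and t := θ^{(N−2)/2}. Then (1/2)·a·t² + ((N−2)/(2(N−1)))·b·t^{2(N−1)/(N−2)} − ((N−2)/(2N))·c·t^{2N/(N−2)} = (1/N)·((N−2)/(2(N−1)))·[c·θ^N + (N/(N−2))·a·θ^{N−2}]. -/
open Real

/-- Closed-form expression for the energy functional restricted to the Nehari manifold. -/
theorem stmt_1 (N : ℕ) (hN : 3 ≤ N) (a b c : ℝ) (ha : 0 < a) (hb : 0 ≤ b) (hc : 0 < c) :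
    let θ : ℝ := (b + Real.sqrt (b ^ 2 + 4 * a * c)) / (2 * c)
    let t : ℝ := θ ^ (((N : ℝ) - 2) / 2)
    (1 / 2) * a * t ^ 2
      + (((N : ℝ) - 2) / (2 * ((N : ℝ) - 1))) * b * t ^ (2 * ((N : ℝ) - 1) / ((N : ℝ) - 2))
      - (((N : ℝ) - 2) / (2 * (N : ℝ))) * c * t ^ (2 * (N : ℝ) / ((N : ℝ) - 2))
    = (1 / (N : ℝ)) * (((N : ℝ) - 2) / (2 * ((N : ℝ) - 1)))
        * (c * θ ^ (N : ℝ) + ((N : ℝ) / ((N : ℝ) - 2)) * a * θ ^ ((N : ℝ) - 2)) := by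
  intro θ t
  have hN3 : (3:ℝ) ≤ (N:ℝ) := by exact_mod_cast hN
  have hNne : (N:ℝ) ≠ 0 := by linarith
  have hN1 : (N:ℝ) - 1 ≠ 0 := by linarith
  have hN2 : (N:ℝ) - 2 ≠ 0 := by linarith
  have hd : (0:ℝ) ≤ b ^ 2 + 4 * a * c := by positivity
  have hs : Real.sqrt (b ^ 2 + 4 * a * c) ^ 2 = b ^ 2 + 4 * a * c := Real.sq_sqrt hd
  have hspos : 0 < Real.sqrt (b ^ 2 + 4 * a * c) := Real.sqrt_pos.mpr (by positivity)
  have hθpos : 0 < θ := by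
    have : 0 < b + Real.sqrt (b ^ 2 + 4 * a * c) := by linarith
    exact div_pos this (by linarith)
  have hθdef : θ = (b + Real.sqrt (b ^ 2 + 4 * a * c)) / (2 * c) := rfl
  have hkey : c * θ ^ 2 = b * θ + a := by
    rw [hθdef]
    field_simp
    rw [show b ^ 2 + c * 4 * a = b ^ 2 + 4 * a * c by ring]
    nlinarith [hs]
  have ht : t = θ ^ (((N : ℝ) - 2) / 2) := rfl
  have h1 : t ^ 2 = θ ^ ((N:ℝ) - 2) := by
    rw [ht, ← Real.rpow_natCast (θ ^ (((N:ℝ) - 2) / 2)) 2, ← Real.rpow_mul hθpos.le]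
    norm_num
  have h2 : t ^ (2 * ((N : ℝ) - 1) / ((N : ℝ) - 2)) = θ ^ ((N:ℝ) - 2) * θ := by
    rw [ht, ← Real.rpow_mul hθpos.le,
      show ((N:ℝ) - 2) / 2 * (2 * ((N : ℝ) - 1) / ((N : ℝ) - 2)) = ((N:ℝ) - 2) + 1 by
        field_simp; ring,
      Real.rpow_add hθpos, Real.rpow_one]
  have h3 : t ^ (2 * (N : ℝ) / ((N : ℝ) - 2)) = θ ^ ((N:ℝ) - 2) * θ ^ 2 := by
    rw [ht, ← Real.rpow_mul hθpos.le,
      show ((N:ℝ) - 2) / 2 * (2 * (N : ℝ) / ((N : ℝ) - 2)) = ((N:ℝ) - 2) + 2 by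
        field_simp; ring,
      Real.rpow_add hθpos, ← Real.rpow_natCast θ 2]
    norm_num
  have hB : θ ^ (N:ℝ) = θ ^ ((N:ℝ) - 2) * θ ^ 2 := by
    rw [show (N:ℝ) = ((N:ℝ) - 2) + 2 by ring, Real.rpow_add hθpos,
      ← Real.rpow_natCast θ 2]
    norm_num
  rw [h1, h2, h3, hB]
  have hθ2 : θ ^ 2 = (b * θ + a) / c := by field_simp; linarith [hkey]
  rw [hθ2]
  field_simp
  ring
end

section
/- For every real d ≥ 0 one has Λ(d) ≥ 1 + (4/τ̃)·d, where τ̃ = 2(N−1)/(N−2). -/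
open Real

/-- Lower bound `Λ(d) ≥ 1 + (4/τ̃)·d` for the normalized Nehari energy, where
`τ̃ = 2(N−1)/(N−2)` and
`Λ(d) = τ̃^(−2/N)·[(d+√(d²+1))^N + (2*/2)·(d+√(d²+1))^(N−2)]^(2/N)`. -/
theorem stmt_2 (N : ℕ) (hN : 5 ≤ N) :
    let τ : ℝ := 2 * ((N : ℝ) - 1) / ((N : ℝ) - 2)
    let Λ : ℝ → ℝ := fun d =>
      τ ^ (-(2 / (N : ℝ))) *
        ((d + Real.sqrt (d ^ 2 + 1)) ^ (N : ℝ)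
          + ((2 * (N : ℝ) / ((N : ℝ) - 2)) / 2) * (d + Real.sqrt (d ^ 2 + 1)) ^ ((N : ℝ) - 2))
          ^ (2 / (N : ℝ))
    ∀ d : ℝ, 0 ≤ d → 1 + (4 / τ) * d ≤ Λ d := by
  intro τ Λ d hd
  have hN' : (5:ℝ) ≤ (N:ℝ) := by exact_mod_cast hN
  have h2 : (0:ℝ) < (N:ℝ) - 2 := by linarith
  have h1 : (0:ℝ) < (N:ℝ) - 1 := by linarith
  have hNpos : (0:ℝ) < (N:ℝ) := by linarith
  have hτ : 0 < τ := by
    have : (0:ℝ) < 2 * ((N:ℝ) - 1) := by linarith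
    exact div_pos this h2
  set s : ℝ := d + Real.sqrt (d ^ 2 + 1) with hs
  have hsq : 1 ≤ Real.sqrt (d ^ 2 + 1) := by
    have h := Real.sqrt_le_sqrt (show (1:ℝ) ≤ d ^ 2 + 1 by nlinarith)
    simpa using h
  have hs1 : 1 + d ≤ s := by rw [hs]; linarith
  have hs0 : 0 < s := by linarith
  set c : ℝ := (N:ℝ) / ((N:ℝ) - 2) with hc_def
  have hc : 0 < c := div_pos hNpos h2
  have hτc : τ = 1 + c := by
    rw [hc_def]; show 2 * ((N : ℝ) - 1) / ((N : ℝ) - 2) = _; field_simp; ring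
  have hw : 1 / τ + c / τ = 1 := by
    rw [hτc]; field_simp
  -- AM–GM
  have amgm := Real.geom_mean_le_arith_mean2_weighted
    (le_of_lt (by positivity : (0:ℝ) < 1 / τ)) (le_of_lt (div_pos hc hτ))
    (le_of_lt (Real.rpow_pos_of_pos hs0 (N:ℝ)))
    (le_of_lt (Real.rpow_pos_of_pos hs0 ((N:ℝ) - 2))) hw
  have hθ : (s ^ (N:ℝ)) ^ (1 / τ) * (s ^ ((N:ℝ) - 2)) ^ (c / τ) = s ^ (2 * (N:ℝ) / τ) := by
    rw [← Real.rpow_mul hs0.le, ← Real.rpow_mul hs0.le, ← Real.rpow_add hs0]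
    congr 1
    rw [hc_def]
    field_simp
    ring
  rw [hθ] at amgm
  have hA : 0 < s ^ (N:ℝ) + c * s ^ ((N:ℝ) - 2) := by
    have := Real.rpow_pos_of_pos hs0 (N:ℝ)
    have := Real.rpow_pos_of_pos hs0 ((N:ℝ) - 2)
    positivity
  have hAτ : s ^ (2 * (N:ℝ) / τ) ≤ (s ^ (N:ℝ) + c * s ^ ((N:ℝ) - 2)) / τ := by
    calc s ^ (2 * (N:ℝ) / τ) ≤ 1 / τ * s ^ (N:ℝ) + c / τ * s ^ ((N:ℝ) - 2) := amgm
    _ = (s ^ (N:ℝ) + c * s ^ ((N:ℝ) - 2)) / τ := by field_simp [hτ.ne']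
  have h2N : (0:ℝ) ≤ 2 / (N:ℝ) := by positivity
  have key : s ^ (4 / τ) ≤ Λ d := by
    have := Real.rpow_le_rpow (Real.rpow_pos_of_pos hs0 _).le hAτ h2N
    rw [← Real.rpow_mul hs0.le] at this
    have hexp : 2 * (N:ℝ) / τ * (2 / (N:ℝ)) = 4 / τ := by
      field_simp; ring
    rw [hexp] at this
    calc s ^ (4 / τ) ≤ ((s ^ (N:ℝ) + c * s ^ ((N:ℝ) - 2)) / τ) ^ (2 / (N:ℝ)) := this
    _ = Λ d := by
        show _ = τ ^ (-(2 / (N : ℝ))) * (s ^ (N:ℝ) + (2 * (N : ℝ) / ((N : ℝ) - 2)) / 2 * s ^ ((N:ℝ) - 2)) ^ (2 / (N : ℝ))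
        have hcc : (2 * (N : ℝ) / ((N : ℝ) - 2)) / 2 = c := by rw [hc_def]; ring
        rw [hcc, Real.div_rpow hA.le hτ.le, Real.rpow_neg hτ.le, div_eq_mul_inv, mul_comm]
  have hθ1 : 1 ≤ 4 / τ := by
    rw [le_div_iff₀ hτ, one_mul]
    show τ ≤ 4
    rw [div_le_iff₀ h2]; linarith
  have bern : 1 + (4 / τ) * d ≤ (1 + d) ^ (4 / τ) :=
    one_add_mul_self_le_rpow_one_add (by linarith) hθ1
  have mono : (1 + d) ^ (4 / τ) ≤ s ^ (4 / τ) :=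
    Real.rpow_le_rpow (by linarith) hs1 (by positivity)
  linarith
end

section
/- There exists a real constant c̄ > 4·τ̃^{−2/N} such that for every real d ≥ 0 one has Λ(d) ≤ 1 + (4/τ̃)·d + c̄·d², where τ̃ = 2(N−1)/(N−2). -/
open Real

lemma exp_quad {x : ℝ} (h0 : 0 ≤ x) (h1 : x ≤ 1) : Real.exp x ≤ 1 + x + x ^ 2 := by
  have h := Real.exp_bound' h0 h1 (n := 2) (by norm_num)
  have hs : (∑ m ∈ Finset.range 2, x ^ m / m.factorial) = 1 + x := by
    simp [Finset.sum_range_succ]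
  rw [hs] at h
  norm_num [Nat.factorial] at h; nlinarith [sq_nonneg x]

lemma pow_quad (n : ℕ) {u : ℝ} (h0 : 0 ≤ u) (h1 : (n : ℝ) * u ≤ 1) :
    (1 + u) ^ n ≤ 1 + n * u + ((n : ℝ) * u) ^ 2 := by
  have h2 : (1 + u) ^ n ≤ Real.exp ((n : ℝ) * u) := by
    calc (1 + u) ^ n ≤ (Real.exp u) ^ n :=
          pow_le_pow_left₀ (by linarith) (by linarith [Real.add_one_le_exp u]) n
    _ = Real.exp ((n : ℝ) * u) := by rw [← Real.exp_nat_mul]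
  exact h2.trans (exp_quad (by positivity) h1)

set_option maxHeartbeats 4000000 in
/-- Quadratic upper bound `Λ(d) ≤ 1 + (4/τ̃)·d + c̄·d²` with `c̄ > 4·τ̃^(−2/N)`
(Lemma 5.1 of the paper), where `τ̃ = 2(N−1)/(N−2)` and
`Λ(d) = τ̃^(−2/N)·[(d+√(d²+1))^N + (2*/2)·(d+√(d²+1))^(N−2)]^(2/N)`. -/
theorem stmt_3 (N : ℕ) (hN : 5 ≤ N) :
    let τ : ℝ := 2 * ((N : ℝ) - 1) / ((N : ℝ) - 2)
    let Λ : ℝ → ℝ := fun d =>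
      τ ^ (-(2 / (N : ℝ))) *
        ((d + Real.sqrt (d ^ 2 + 1)) ^ (N : ℝ)
          + ((2 * (N : ℝ) / ((N : ℝ) - 2)) / 2) * (d + Real.sqrt (d ^ 2 + 1)) ^ ((N : ℝ) - 2))
          ^ (2 / (N : ℝ))
    ∃ cbar : ℝ, 4 * τ ^ (-(2 / (N : ℝ))) < cbar ∧
      ∀ d : ℝ, 0 ≤ d → Λ d ≤ 1 + (4 / τ) * d + cbar * d ^ 2 := by
  intro τ Λ
  have hτdef : τ = 2 * ((N : ℝ) - 1) / ((N : ℝ) - 2) := rfl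
  simp only [Λ]
  clear_value τ
  clear Λ
  have hm5 : (5 : ℝ) ≤ (N : ℝ) := by exact_mod_cast hN
  have hm0 : (0:ℝ) < (N : ℝ) := by linarith
  have hm2 : (0:ℝ) < (N : ℝ) - 2 := by linarith
  have hτ2 : 2 ≤ τ := by rw [hτdef, le_div_iff₀ hm2]; linarith
  have hτ0 : (0:ℝ) < τ := by linarith
  -- the coefficient a = N/(N-2)
  obtain ⟨a, ha⟩ : ∃ a : ℝ, a = (N : ℝ) / ((N : ℝ) - 2) := ⟨_, rfl⟩
  have ha0 : 0 < a := ha ▸ div_pos hm0 hm2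
  have haN : a * ((N : ℝ) - 2) = (N : ℝ) := by rw [ha]; exact div_mul_cancel₀ _ hm2.ne'
  have haτ : τ = 1 + a := by
    have h1 : τ * ((N : ℝ) - 2) = 2 * ((N : ℝ) - 1) := by
      rw [hτdef]; exact div_mul_cancel₀ _ hm2.ne'
    have h2 : (1 + a) * ((N : ℝ) - 2) = 2 * ((N : ℝ) - 1) := by
      rw [add_mul, one_mul, haN]; ring
    exact mul_right_cancel₀ hm2.ne' (h1.trans h2.symm)
  have hcast2 : (N : ℝ) - 2 = ((N - 2 : ℕ) : ℝ) := by
    rw [Nat.cast_sub (by omega)]; norm_num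
  -- exponent p = 2/N
  have hp0 : (0:ℝ) < 2 / (N : ℝ) := by positivity
  have hp1 : 2 / (N : ℝ) ≤ 1 := by rw [div_le_one hm0]; linarith
  refine ⟨4 + 8*(N : ℝ) + 7*(N : ℝ)^2, ?_, ?_⟩
  · have h1 : τ ^ (-(2 / (N : ℝ))) ≤ 1 :=
      Real.rpow_le_one_of_one_le_of_nonpos (by linarith) (by linarith [hp0])
    nlinarith
  intro d hd
  obtain ⟨s, hsdef⟩ : ∃ s : ℝ, s = d + Real.sqrt (d ^ 2 + 1) := ⟨_, rfl⟩
  have hsq1 : 1 ≤ Real.sqrt (d ^ 2 + 1) := by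
    have := Real.sqrt_le_sqrt (show (1:ℝ) ≤ d ^ 2 + 1 by nlinarith)
    rwa [Real.sqrt_one] at this
  have hsqd : Real.sqrt (d ^ 2 + 1) ≤ 1 + d := by
    have := Real.sqrt_le_sqrt (show d ^ 2 + 1 ≤ (1 + d) ^ 2 by nlinarith)
    rwa [Real.sqrt_sq (by linarith)] at this
  have hsqd2 : Real.sqrt (d ^ 2 + 1) ≤ 1 + d ^ 2 / 2 := by
    have := Real.sqrt_le_sqrt (show d ^ 2 + 1 ≤ (1 + d ^ 2 / 2) ^ 2 by nlinarith)
    rwa [Real.sqrt_sq (by positivity)] at this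
  have hs1 : 1 ≤ s := by rw [hsdef]; linarith
  have hs0 : 0 < s := by linarith
  have hs2d : s ≤ 1 + 2 * d := by rw [hsdef]; linarith
  have hsd2 : s ≤ 1 + d + d ^ 2 / 2 := by rw [hsdef]; linarith
  obtain ⟨f, hf⟩ : ∃ f : ℝ, f = s ^ N + a * s ^ (N - 2) := ⟨_, rfl⟩
  have hf0 : 0 < f := by rw [hf]; positivity
  have hΛ : (d + Real.sqrt (d ^ 2 + 1)) ^ (N : ℝ)
      + ((2 * (N : ℝ) / ((N : ℝ) - 2)) / 2) * (d + Real.sqrt (d ^ 2 + 1)) ^ ((N : ℝ) - 2)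
      = f := by
    rw [← hsdef, hcast2, Real.rpow_natCast, Real.rpow_natCast, hf]
    rw [show 2 * (N:ℝ) / ((N - 2 : ℕ):ℝ) / 2 = a by rw [← hcast2, ha]; ring]
  rw [hΛ]
  by_cases hcase : d ≤ 1 / (2 * (N : ℝ))
  · -- small d : Bernoulli + quadratic expansion
    obtain ⟨u, hu⟩ : ∃ u : ℝ, u = s - 1 := ⟨_, rfl⟩
    have hu0 : 0 ≤ u := by rw [hu]; linarith
    have hu2d : u ≤ 2 * d := by rw [hu]; linarith
    have hud2 : u ≤ d + d ^ 2 / 2 := by rw [hu]; linarith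
    have hNu : (N : ℝ) * u ≤ 1 := by
      have h2 : d * (2 * (N : ℝ)) ≤ 1 := by
        rw [le_div_iff₀ (by positivity)] at hcase; linarith
      nlinarith
    have hA : s ^ N ≤ 1 + (N : ℝ) * u + ((N : ℝ) * u) ^ 2 := by
      have := pow_quad N hu0 hNu
      rwa [show (1:ℝ) + u = s by rw [hu]; ring] at this
    have hB : s ^ (N - 2) ≤ 1 + ((N : ℝ) - 2) * u + (((N : ℝ) - 2) * u) ^ 2 := by
      have hle : ((N - 2 : ℕ) : ℝ) * u ≤ 1 := by
        have hc : ((N - 2 : ℕ) : ℝ) ≤ (N : ℝ) := by exact_mod_cast Nat.sub_le N 2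
        have := mul_le_mul_of_nonneg_right hc hu0
        linarith
      have := pow_quad (N - 2) hu0 hle
      rwa [show (1:ℝ) + u = s by rw [hu]; ring, ← hcast2] at this
    have hfb : f ≤ τ + 2 * (N : ℝ) * d + ((N : ℝ) + 8 * (N : ℝ) ^ 2) * d ^ 2 := by
      have hB' : a * s ^ (N - 2) ≤ a * (1 + ((N:ℝ) - 2) * u + (((N:ℝ) - 2) * u) ^ 2) :=
        mul_le_mul_of_nonneg_left hB ha0.le
      have hexp : a * (1 + ((N:ℝ) - 2) * u + (((N:ℝ) - 2) * u) ^ 2)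
          = a + (N:ℝ) * u + (N:ℝ) * ((N:ℝ) - 2) * u ^ 2 := by
        have h2 : a * (((N:ℝ) - 2) * u) ^ 2 = (N:ℝ) * ((N:ℝ) - 2) * u ^ 2 := by
          calc a * (((N:ℝ) - 2) * u) ^ 2 = (a * ((N:ℝ)-2)) * (((N:ℝ)-2) * u ^ 2) := by ring
          _ = (N:ℝ) * ((N:ℝ) - 2) * u ^ 2 := by rw [haN]; ring
        calc a * (1 + ((N:ℝ) - 2) * u + (((N:ℝ) - 2) * u) ^ 2)
            = a + (a * ((N:ℝ)-2)) * u + a * (((N:ℝ) - 2) * u) ^ 2 := by ring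
        _ = _ := by rw [haN, h2]
      rw [hexp] at hB'
      have hfu : f ≤ τ + 2 * (N:ℝ) * u + 2 * (N:ℝ) ^ 2 * u ^ 2 := by
        have hq : (N:ℝ) * ((N:ℝ) - 2) * u ^ 2 ≤ (N:ℝ) ^ 2 * u ^ 2 :=
          mul_le_mul_of_nonneg_right (by nlinarith) (sq_nonneg u)
        rw [hf, haτ]; nlinarith [sq_nonneg ((N:ℝ) * u)]
      have hu2 : u ^ 2 ≤ 4 * d ^ 2 := by
        have := pow_le_pow_left₀ hu0 hu2d 2
        nlinarith
      have e1 : (N:ℝ) * u ≤ (N:ℝ) * (d + d ^ 2 / 2) :=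
        mul_le_mul_of_nonneg_left hud2 hm0.le
      have e2 : 2 * (N:ℝ) ^ 2 * u ^ 2 ≤ 2 * (N:ℝ) ^ 2 * (4 * d ^ 2) :=
        mul_le_mul_of_nonneg_left hu2 (by positivity)
      nlinarith
    have hfτ : τ ≤ f := by
      have h1 : (1:ℝ) ≤ s ^ N := one_le_pow₀ hs1
      have h2 : (1:ℝ) ≤ s ^ (N - 2) := one_le_pow₀ hs1
      rw [hf, haτ]; nlinarith
    have hkey : τ ^ (-(2 / (N : ℝ))) * f ^ (2 / (N : ℝ)) = (f / τ) ^ (2 / (N : ℝ)) := by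
      rw [Real.div_rpow hf0.le hτ0.le, Real.rpow_neg hτ0.le, div_eq_mul_inv]; ring
    rw [hkey]
    have hbern : (f / τ) ^ (2 / (N : ℝ)) ≤ 1 + (2 / (N : ℝ)) * (f / τ - 1) := by
      have h := rpow_one_add_le_one_add_mul_self
        (s := f / τ - 1) (by nlinarith [div_nonneg hf0.le hτ0.le]) hp0.le hp1
      rwa [show (1:ℝ) + (f / τ - 1) = f / τ by ring] at h
    refine hbern.trans ?_
    have hdivτ : f / τ - 1 = (f - τ) / τ := by field_simp
    have hfinal : (2 / (N : ℝ)) * ((f - τ) / τ)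
        ≤ 4 / τ * d + (4 + 8*(N:ℝ) + 7*(N:ℝ)^2) * d ^ 2 := by
      have e1 : (2 / (N:ℝ)) * ((f - τ) / τ)
          ≤ (2 / (N:ℝ)) * ((2 * (N:ℝ) * d + ((N:ℝ) + 8 * (N:ℝ) ^ 2) * d ^ 2) / τ) := by
        gcongr
        linarith [hfb]
      have e2 : (2 / (N:ℝ)) * ((2 * (N:ℝ) * d + ((N:ℝ) + 8 * (N:ℝ) ^ 2) * d ^ 2) / τ)
          = 4 / τ * d + (2 * (1 + 8 * (N:ℝ)) / τ) * d ^ 2 := by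
        field_simp
        ring
      rw [e2] at e1
      have e3 : 2 * (1 + 8 * (N:ℝ)) / τ ≤ 1 + 8 * (N:ℝ) := by
        rw [div_le_iff₀ hτ0]
        have := mul_nonneg (show (0:ℝ) ≤ 1 + 8 * (N:ℝ) by linarith) (sub_nonneg.2 hτ2)
        nlinarith
      have e4 := mul_le_mul_of_nonneg_right e3 (sq_nonneg d)
      have e5 : (1 + 8 * (N:ℝ)) * d ^ 2 ≤ (4 + 8 * (N:ℝ) + 7 * (N:ℝ) ^ 2) * d ^ 2 :=
        mul_le_mul_of_nonneg_right (by nlinarith [sq_nonneg (N:ℝ)]) (sq_nonneg d)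
      linarith
    rw [hdivτ]
    linarith
  · -- large d : crude bound Λ ≤ s² ≤ (1+2d)²
    push_neg at hcase
    have hd1 : 1 ≤ d * (2 * (N:ℝ)) := by
      rw [div_lt_iff₀ (by positivity)] at hcase; linarith
    have hfτs : f ≤ τ * s ^ N := by
      have hpow : s ^ (N - 2) ≤ s ^ N := pow_le_pow_right₀ hs1 (by omega)
      have h1 : a * s ^ (N - 2) ≤ a * s ^ N := mul_le_mul_of_nonneg_left hpow ha0.le
      rw [hf, haτ, add_mul, one_mul]; linarith
    have hfp : f ^ (2 / (N:ℝ)) ≤ (τ * s ^ N) ^ (2 / (N:ℝ)) :=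
      Real.rpow_le_rpow hf0.le hfτs hp0.le
    have hsplit : (τ * s ^ N) ^ (2 / (N:ℝ)) = τ ^ (2 / (N:ℝ)) * s ^ 2 := by
      rw [Real.mul_rpow hτ0.le (by positivity)]
      congr 1
      rw [← Real.rpow_natCast_mul hs0.le N (2 / (N:ℝ)),
        show (N:ℝ) * (2 / (N:ℝ)) = 2 by field_simp,
        show (2:ℝ) = ((2:ℕ):ℝ) by norm_num, Real.rpow_natCast]
    have hΛs : τ ^ (-(2 / (N:ℝ))) * f ^ (2 / (N:ℝ)) ≤ s ^ 2 := by
      calc τ ^ (-(2 / (N:ℝ))) * f ^ (2 / (N:ℝ))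
          ≤ τ ^ (-(2 / (N:ℝ))) * (τ ^ (2 / (N:ℝ)) * s ^ 2) := by
            rw [hsplit] at hfp
            exact mul_le_mul_of_nonneg_left hfp (by positivity)
      _ = s ^ 2 := by
            rw [Real.rpow_neg hτ0.le, ← mul_assoc,
              inv_mul_cancel₀ (by positivity), one_mul]
    refine hΛs.trans ?_
    have hs2 : s ^ 2 ≤ 1 + 4 * d + 4 * d ^ 2 := by nlinarith
    have h4τ : 0 ≤ 4 / τ * d := by positivity
    have h8 := mul_le_mul_of_nonneg_left hd1 (show (0:ℝ) ≤ 4 * d by positivity)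
    have h9 : (0:ℝ) ≤ 7 * (N:ℝ) ^ 2 * d ^ 2 := by positivity
    nlinarith [h8, h9]
end

section
/- Let η ≥ 2 be a real number and set C̃ := 1 + η(η−1)/2. Then for every real z ≥ −1 one has (η(η−1)/2)·z² − C̃·|z| + 1 ≤ (1+z)^η. -/
open Real

private lemma key_aux (η : ℝ) (hη : 2 ≤ η) {z : ℝ} (hz : 0 ≤ z) :
    1 + (η * (η - 1) / 2) * z ^ 2 ≤ (1 + z) ^ η := by
  set q : ℝ := η * (η - 1) / 2 with hq
  set g : ℝ → ℝ := fun z => (1 + z) ^ η - q * z ^ 2 with hg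
  have hd : ∀ x : ℝ, -1 < x →
      HasDerivAt g (η * (1 + x) ^ (η - 1) - q * (2 * x)) x := by
    intro x hx
    have h1 : HasDerivAt (fun z : ℝ => 1 + z) 1 x := by
      simpa using (hasDerivAt_id x).const_add (1 : ℝ)
    have h2 : HasDerivAt (fun z : ℝ => (1 + z) ^ η)
        (η * (1 + x) ^ (η - 1) * 1) x := by
      exact (Real.hasDerivAt_rpow_const (x := 1 + x) (p := η)
        (Or.inl (by linarith))).comp x h1
    have h3 : HasDerivAt (fun z : ℝ => q * z ^ 2) (q * (2 * x)) x := by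
      simpa using (hasDerivAt_pow 2 x).const_mul q
    have h4 := h2.sub h3
    simp only [mul_one] at h4
    exact h4
  have hmono : MonotoneOn g (Set.Ici (0 : ℝ)) := by
    apply monotoneOn_of_deriv_nonneg (convex_Ici 0)
    · intro x hx
      exact (hd x (by simp at hx; linarith)).continuousAt.continuousWithinAt
    · intro x hx
      rw [interior_Ici] at hx
      exact (hd x (by simp at hx; linarith)).differentiableAt.differentiableWithinAt
    · intro x hx
      rw [interior_Ici] at hx
      simp only [Set.mem_Ioi] at hx
      rw [(hd x (by linarith)).deriv]
      have hb : 1 + (η - 1) * x ≤ (1 + x) ^ (η - 1) :=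
        one_add_mul_self_le_rpow_one_add (by linarith) (by linarith)
      have hη0 : (0 : ℝ) < η := by linarith
      nlinarith [mul_le_mul_of_nonneg_left hb (le_of_lt hη0)]
  have h0 : g 0 ≤ g z := hmono (by simp) (by simpa using hz) hz
  have hg0 : g 0 = 1 := by simp [hg, Real.one_rpow]
  have : g z = (1 + z) ^ η - q * z ^ 2 := rfl
  linarith [h0, hg0.symm ▸ h0]

/-- Calculus Lemma 4.3 of the paper: for `η ≥ 2`, `C̃ = 1 + η(η−1)/2` and every `z ≥ −1`,
`(η(η−1)/2)·z² − C̃·|z| + 1 ≤ (1+z)^η`. -/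
theorem stmt_5 (η : ℝ) (hη : 2 ≤ η) :
    let Ctilde : ℝ := 1 + η * (η - 1) / 2
    ∀ z : ℝ, -1 ≤ z →
      (η * (η - 1) / 2) * z ^ 2 - Ctilde * |z| + 1 ≤ (1 + z) ^ η := by
  intro Ctilde z hz
  rcases le_or_gt 0 z with hz0 | hz0
  · rw [abs_of_nonneg hz0]
    have hkey := key_aux η hη hz0
    have hq : 0 ≤ η * (η - 1) / 2 := by nlinarith
    simp only [Ctilde]
    nlinarith
  · rw [abs_of_neg hz0]
    -- negative case: show (1 + q z)(1 + z) ≤ (1+z)^η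
    have h1z : (0 : ℝ) ≤ 1 + z := by linarith
    have hb : 1 + (η - 1) * z ≤ (1 + z) ^ (η - 1) :=
      one_add_mul_self_le_rpow_one_add hz (by linarith)
    have hmul : (1 + (η - 1) * z) * (1 + z) ≤ (1 + z) ^ (η - 1) * (1 + z) :=
      mul_le_mul_of_nonneg_right hb h1z
    have hpow : (1 + z) ^ (η - 1) * (1 + z) = (1 + z) ^ η := by
      have : (1 + z) ^ ((η - 1) + 1) = (1 + z) ^ (η - 1) * (1 + z) ^ (1 : ℝ) :=
        Real.rpow_add' h1z (by intro h; nlinarith)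
      rw [sub_add_cancel] at this
      rw [this, Real.rpow_one]
    rw [hpow] at hmul
    -- q ≥ η - 1, z < 0 so (1 + q z)(1 + z) ≤ (1 + (η-1) z)(1 + z)
    have hqe : η - 1 ≤ η * (η - 1) / 2 := by nlinarith
    simp only [Ctilde]
    nlinarith [mul_le_mul_of_nonneg_right
      (show 1 + (η * (η - 1) / 2) * z ≤ 1 + (η - 1) * z by nlinarith) h1z]
end

section
/- For every integer N ≥ 3, ∫_{ℝ^N} U(x)^{2N/(N−2)} dx = π^{(N+1)/2}·2^{1−N}·[N(N−2)]^{N/2} / Γ((N+1)/2). -/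
open Real MeasureTheory

/-- The Talenti instanton `U(x) = (N(N−2)/(N(N−2)+|x|²))^((N−2)/2)` on `ℝ^N`. -/
noncomputable def talenti (N : ℕ) (x : EuclideanSpace ℝ (Fin N)) : ℝ :=
  ((N : ℝ) * ((N : ℝ) - 2) / ((N : ℝ) * ((N : ℝ) - 2) + ‖x‖ ^ 2)) ^ (((N : ℝ) - 2) / 2)

open Set

lemma beta_Ioo {s t : ℝ} (hs : 0 < s) (ht : 0 < t) :
    ∫ x in Ioo (0:ℝ) 1, x ^ (s - 1) * (1 - x) ^ (t - 1)
      = Real.Gamma s * Real.Gamma t / Real.Gamma (s + t) := by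
  have h := Complex.Gamma_mul_Gamma_eq_betaIntegral (s := (s:ℂ)) (t := (t:ℂ))
    (by simpa using hs) (by simpa using ht)
  have hB : Complex.betaIntegral (s:ℂ) (t:ℂ)
      = ((∫ x in (0:ℝ)..1, x ^ (s - 1) * (1 - x) ^ (t - 1) : ℝ) : ℂ) := by
    rw [← intervalIntegral.integral_ofReal]
    refine intervalIntegral.integral_congr fun x hx => ?_
    rw [Set.uIcc_of_le zero_le_one] at hx
    push_cast
    rw [Complex.ofReal_cpow hx.1, Complex.ofReal_cpow (by linarith [hx.2] : (0:ℝ) ≤ 1 - x)]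
    push_cast
    ring
  rw [hB, ← Complex.ofReal_add, Complex.Gamma_ofReal, Complex.Gamma_ofReal,
    Complex.Gamma_ofReal, ← Complex.ofReal_mul, ← Complex.ofReal_mul] at h
  have h' : Real.Gamma s * Real.Gamma t
      = Real.Gamma (s + t) * ∫ x in (0:ℝ)..1, x ^ (s - 1) * (1 - x) ^ (t - 1) := by
    exact_mod_cast h
  have hG : Real.Gamma (s + t) ≠ 0 := (Real.Gamma_pos_of_pos (by linarith)).ne'
  rw [← MeasureTheory.integral_Ioc_eq_integral_Ioo, ← intervalIntegral.integral_of_le zero_le_one] 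
  field_simp [h']
  rw [h']; ring

lemma image_sq : (fun r : ℝ => r ^ 2) '' Ioi 0 = Ioi 0 := by
  ext u
  constructor
  · rintro ⟨r, hr, rfl⟩
    exact pow_pos (mem_Ioi.mp hr) 2
  · intro hu
    exact ⟨Real.sqrt u, Real.sqrt_pos.mpr hu, Real.sq_sqrt hu.le⟩

lemma image_frac {c : ℝ} (hc : 0 < c) : (fun t : ℝ => c * t / (1 - t)) '' Ioo 0 1 = Ioi 0 := by
  ext u
  constructor
  · rintro ⟨t, ⟨ht0, ht1⟩, rfl⟩
    exact div_pos (mul_pos hc ht0) (by linarith)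
  · intro hu
    rw [mem_Ioi] at hu
    refine ⟨u / (c + u), ⟨div_pos hu (by linarith), (div_lt_one (by linarith)).mpr (by linarith)⟩, ?_⟩
    have h1 : c + u ≠ 0 := by positivity
    field_simp
    rw [add_sub_cancel_right, div_self hc.ne']

lemma injOn_sq : Set.InjOn (fun r : ℝ => r ^ 2) (Ioi 0) := by
  intro a ha b hb h
  simp only [mem_Ioi] at ha hb
  simp only at h
  have h' : (a - b) * (a + b) = 0 := by nlinarith [h]
  rcases mul_eq_zero.mp h' with h'' | h''
  · linarith
  · linarith

lemma injOn_frac {c : ℝ} (hc : 0 < c) : Set.InjOn (fun t : ℝ => c * t / (1 - t)) (Ioo 0 1) := by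
  intro a ha b hb h
  simp only [mem_Ioo] at ha hb
  simp only at h
  have ha1 : (1:ℝ) - a ≠ 0 := by linarith [ha.2]
  have hb1 : (1:ℝ) - b ≠ 0 := by linarith [hb.2]
  field_simp at h
  nlinarith [hc]

lemma stepA (N : ℕ) (hN : 3 ≤ N) {c : ℝ} (hc : 0 < c) :
    ∫ r in Ioi (0:ℝ), r ^ (N - 1) * (c / (c + r ^ 2)) ^ (N:ℝ)
      = ∫ u in Ioi (0:ℝ), (1/2) * (u ^ ((N:ℝ)/2 - 1) * (c / (c + u)) ^ (N:ℝ)) := by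
  have h := integral_image_eq_integral_abs_deriv_smul (f' := fun r : ℝ => 2 * r)
    measurableSet_Ioi
    (fun r _ => by simpa using (hasDerivAt_pow 2 r).hasDerivWithinAt)
    injOn_sq (fun u => (1/2) * (u ^ ((N:ℝ)/2 - 1) * (c / (c + u)) ^ (N:ℝ)))
  rw [image_sq] at h
  rw [h]
  refine setIntegral_congr_fun measurableSet_Ioi fun r hr => ?_
  rw [mem_Ioi] at hr
  have e1 : ((r : ℝ) ^ 2) ^ ((N:ℝ)/2 - 1) = r ^ ((N:ℝ) - 2) := by
    rw [← Real.rpow_natCast r 2, ← Real.rpow_mul hr.le]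
    congr 1
    push_cast
    ring
  have e2 : (r : ℝ) ^ (N - 1) = r ^ ((N:ℝ) - 1) := by
    rw [← Real.rpow_natCast r (N - 1), Nat.cast_sub (by omega), Nat.cast_one]
  have e3 : r * r ^ ((N:ℝ) - 2) = r ^ ((N:ℝ) - 1) := by
    nth_rewrite 1 [← Real.rpow_one r]
    rw [← Real.rpow_add hr]
    congr 1
    ring
  simp only [smul_eq_mul]
  rw [e2, abs_of_pos (by positivity), e1, ← e3]
  ring

lemma stepB (N : ℕ) (hN : 3 ≤ N) {c : ℝ} (hc : 0 < c) :
    ∫ u in Ioi (0:ℝ), (1/2) * (u ^ ((N:ℝ)/2 - 1) * (c / (c + u)) ^ (N:ℝ))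
      = (1/2) * c ^ ((N:ℝ)/2) *
          ∫ t in Ioo (0:ℝ) 1, t ^ ((N:ℝ)/2 - 1) * (1 - t) ^ ((N:ℝ)/2 - 1) := by
  have hderiv : ∀ t ∈ Ioo (0:ℝ) 1, HasDerivWithinAt (fun t : ℝ => c * t / (1 - t))
      (c / (1 - t) ^ 2) (Ioo 0 1) t := by
    intro t ht
    rw [mem_Ioo] at ht
    have h1 : (1:ℝ) - t ≠ 0 := by linarith [ht.2]
    have hd := (((hasDerivAt_id t).const_mul c).div
      ((hasDerivAt_const t (1:ℝ)).sub (hasDerivAt_id t)) h1)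
    refine HasDerivWithinAt.congr_deriv hd.hasDerivWithinAt ?_
    simp only [Pi.sub_apply, id]
    field_simp
    ring
  have h := integral_image_eq_integral_abs_deriv_smul measurableSet_Ioo hderiv (injOn_frac hc)
    (fun u => (1/2) * (u ^ ((N:ℝ)/2 - 1) * (c / (c + u)) ^ (N:ℝ)))
  rw [image_frac hc] at h
  rw [h, ← MeasureTheory.integral_const_mul]
  refine setIntegral_congr_fun measurableSet_Ioo fun t ht => ?_
  rw [mem_Ioo] at ht
  have h1t : (0:ℝ) < 1 - t := by linarith [ht.2]
  have hkey : c + c * t / (1 - t) = c / (1 - t) := by field_simp; ring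
  have hkey2 : c / (c / (1 - t)) = 1 - t := by field_simp
  simp only [smul_eq_mul]
  rw [hkey, hkey2]
  rw [abs_of_pos (div_pos hc (pow_pos h1t 2))]
  have A : (c * t / (1 - t)) ^ ((N:ℝ)/2 - 1)
      = c ^ ((N:ℝ)/2 - 1) * t ^ ((N:ℝ)/2 - 1) * ((1 - t) ^ ((N:ℝ)/2 - 1))⁻¹ := by
    rw [Real.div_rpow (mul_nonneg hc.le ht.1.le) h1t.le, Real.mul_rpow hc.le ht.1.le, div_eq_mul_inv]
  have B : ((1 - t):ℝ) ^ (N:ℝ)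
      = (1 - t) ^ ((N:ℝ)/2 - 1) * (1 - t) ^ ((N:ℝ)/2 - 1) * (1 - t) ^ 2 := by
    rw [← Real.rpow_natCast (1 - t) 2, ← Real.rpow_add h1t, ← Real.rpow_add h1t]
    congr 1
    push_cast
    ring
  have C : c * c ^ ((N:ℝ)/2 - 1) = c ^ ((N:ℝ)/2) := by
    nth_rewrite 1 [← Real.rpow_one c]
    rw [← Real.rpow_add hc]
    congr 1
    ring
  have he : ((1 - t):ℝ) ^ ((N:ℝ)/2 - 1) ≠ 0 := by positivity
  have h2 : ((1 - t):ℝ) ^ 2 ≠ 0 := by positivity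
  rw [A, B, ← C]
  field_simp

/-- `∫_{ℝ^N} U^{2N/(N−2)} = π^((N+1)/2)·2^(1−N)·[N(N−2)]^(N/2)/Γ((N+1)/2)`. -/
theorem stmt_7 (N : ℕ) (hN : 3 ≤ N) :
    ∫ x : EuclideanSpace ℝ (Fin N), talenti N x ^ (2 * (N : ℝ) / ((N : ℝ) - 2))
      = Real.pi ^ (((N : ℝ) + 1) / 2) * 2 ^ (1 - (N : ℝ))
          * ((N : ℝ) * ((N : ℝ) - 2)) ^ ((N : ℝ) / 2) / Real.Gamma (((N : ℝ) + 1) / 2) := by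
  have hN2 : (2:ℝ) < (N:ℝ) := by exact_mod_cast (by omega : 2 < N)
  set c : ℝ := (N:ℝ) * ((N:ℝ) - 2) with hcdef
  have hc : 0 < c := mul_pos (by linarith) (by linarith)
  haveI : NeZero N := ⟨by omega⟩
  have hpt : ∀ x : EuclideanSpace ℝ (Fin N),
      talenti N x ^ (2 * (N : ℝ) / ((N : ℝ) - 2)) = (c / (c + ‖x‖ ^ 2)) ^ (N:ℝ) := by
    intro x
    rw [talenti, ← Real.rpow_mul (div_nonneg hc.le (add_nonneg hc.le (sq_nonneg _)))]
    congr 1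
    have h2 : (N:ℝ) - 2 ≠ 0 := by linarith
    field_simp
  simp_rw [hpt]
  have key := MeasureTheory.integral_fun_norm_addHaar
    (volume : Measure (EuclideanSpace ℝ (Fin N))) (fun r : ℝ => (c / (c + r ^ 2)) ^ (N:ℝ))
  simp only [finrank_euclideanSpace_fin, smul_eq_mul, nsmul_eq_mul] at key
  rw [key, stepA N hN hc, stepB N hN hc,
    beta_Ioo (by linarith : (0:ℝ) < (N:ℝ)/2) (by linarith : (0:ℝ) < (N:ℝ)/2)]
  have hvol : ((volume : Measure (EuclideanSpace ℝ (Fin N))) (Metric.ball 0 1)).toReal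
      = Real.sqrt π ^ N / Real.Gamma ((N:ℝ)/2 + 1) := by
    rw [EuclideanSpace.volume_ball]
    rw [ENNReal.ofReal_one, one_pow, one_mul, Fintype.card_fin,
      ENNReal.toReal_ofReal (div_nonneg (by positivity)
        (Real.Gamma_nonneg_of_nonneg (by positivity)))]
  rw [measureReal_def, hvol]
  have hGpos : 0 < Real.Gamma ((N:ℝ)/2) := Real.Gamma_pos_of_pos (by linarith)
  have hHpos : 0 < Real.Gamma (((N:ℝ)+1)/2) := Real.Gamma_pos_of_pos (by linarith)
  have hNpos : 0 < Real.Gamma ((N:ℝ)) := Real.Gamma_pos_of_pos (by linarith)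
  have hadd : (N:ℝ)/2 + (N:ℝ)/2 = (N:ℝ) := by ring
  rw [hadd]
  have hG1 : Real.Gamma ((N:ℝ)/2 + 1) = ((N:ℝ)/2) * Real.Gamma ((N:ℝ)/2) :=
    Real.Gamma_add_one (by linarith)
  rw [hG1]
  have hdup : Real.Gamma ((N:ℝ)/2) * Real.Gamma (((N:ℝ)+1)/2)
      = Real.Gamma ((N:ℝ)) * 2 ^ (1 - (N:ℝ)) * Real.sqrt π := by
    have h := Real.Gamma_mul_Gamma_add_half ((N:ℝ)/2)
    rw [show (N:ℝ)/2 + 1/2 = ((N:ℝ)+1)/2 by ring, show 2*((N:ℝ)/2) = (N:ℝ) by ring] at h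
    exact h
  have hpi1 : Real.sqrt π ^ N = π ^ ((N:ℝ)/2) := by
    rw [Real.sqrt_eq_rpow, ← Real.rpow_natCast (π ^ ((1:ℝ)/2)) N,
      ← Real.rpow_mul Real.pi_nonneg]
    congr 1
    ring
  have hpi2 : π ^ (((N:ℝ)+1)/2) = π ^ ((N:ℝ)/2) * Real.sqrt π := by
    rw [Real.sqrt_eq_rpow, ← Real.rpow_add Real.pi_pos]
    congr 1
    ring
  rw [hpi1, hpi2]
  have hNne : (N:ℝ) ≠ 0 := by linarith
  field_simp
  linear_combination hdup
end

section
/- For every integer N ≥ 3, ∫_{ℝ^N} U(x)^{2(N−1)/(N−2)} dx = (2(N−1)/(N−2))·π^{(N+1)/2}·2^{1−N}·[N(N−2)]^{N/2} / Γ((N+1)/2). -/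
open Real MeasureTheory

open Set

lemma real_beta {a b : ℝ} (ha : 0 < a) (hb : 0 < b) :
    ∫ x in Ioo (0:ℝ) 1, x ^ (a - 1) * (1 - x) ^ (b - 1)
      = Real.Gamma a * Real.Gamma b / Real.Gamma (a + b) := by
  have hab : Real.Gamma (a + b) ≠ 0 := (Real.Gamma_pos_of_pos (by linarith)).ne'
  rw [eq_div_iff hab]
  have key := Complex.Gamma_mul_Gamma_eq_betaIntegral
    (s := (a : ℂ)) (t := (b : ℂ)) (by simpa using ha) (by simpa using hb)
  rw [Complex.betaIntegral] at key
  have h1 : (∫ x in (0:ℝ)..1, (x : ℂ) ^ ((a:ℂ) - 1) * (1 - (x:ℂ)) ^ ((b:ℂ) - 1))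
      = ((∫ x in Ioo (0:ℝ) 1, x ^ (a - 1) * (1 - x) ^ (b - 1) : ℝ) : ℂ) := by
    rw [intervalIntegral.integral_of_le zero_le_one, integral_Ioc_eq_integral_Ioo]
    rw [show ((∫ x in Ioo (0:ℝ) 1, x ^ (a - 1) * (1 - x) ^ (b - 1) : ℝ) : ℂ)
        = ∫ x in Ioo (0:ℝ) 1, ((x ^ (a - 1) * (1 - x) ^ (b - 1) : ℝ) : ℂ) from integral_ofReal.symm]
    refine setIntegral_congr_fun measurableSet_Ioo fun x hx => ?_
    have hx0 : (0:ℝ) ≤ x := hx.1.le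
    have hx1 : (0:ℝ) ≤ 1 - x := by linarith [hx.2.le]
    push_cast
    rw [Complex.ofReal_cpow hx0, Complex.ofReal_cpow hx1]
    push_cast
    ring
  rw [h1, ← Complex.ofReal_add, Complex.Gamma_ofReal, Complex.Gamma_ofReal,
    Complex.Gamma_ofReal, ← Complex.ofReal_mul, ← Complex.ofReal_mul,
    Complex.ofReal_inj] at key
  rw [key]; ring
lemma beta_Ioi {a b : ℝ} (ha : 0 < a) (hb : 0 < b) :
    ∫ u in Ioi (0:ℝ), u ^ (a - 1) * (1 + u) ^ (-(a + b))
      = Real.Gamma a * Real.Gamma b / Real.Gamma (a + b) := by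
  have himg : (fun u : ℝ => (1 + u)⁻¹) '' Ioi 0 = Ioo 0 1 := by
    ext s
    constructor
    · rintro ⟨u, hu, rfl⟩
      have h1 : (0:ℝ) < 1 + u := by linarith [mem_Ioi.mp hu]
      exact ⟨inv_pos.mpr h1, by rw [inv_lt_one_iff₀]; right; linarith [mem_Ioi.mp hu]⟩
    · rintro ⟨hs0, hs1⟩
      refine ⟨s⁻¹ - 1, by rw [mem_Ioi, sub_pos]; exact (one_lt_inv_iff₀).mpr ⟨hs0, hs1⟩, ?_⟩
      field_simp; ring
  have hderiv : ∀ u ∈ Ioi (0:ℝ), HasDerivWithinAt (fun u : ℝ => (1 + u)⁻¹)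
      (-(((1 + u) ^ 2)⁻¹)) (Ioi 0) u := by
    intro u hu
    have h1 : (1:ℝ) + u ≠ 0 := by have := mem_Ioi.mp hu; positivity
    have := ((hasDerivAt_id u).const_add 1).inv h1
    simp only [id, neg_div, one_div] at this
    exact this.hasDerivWithinAt
  have hinj : InjOn (fun u : ℝ => (1 + u)⁻¹) (Ioi 0) := by
    intro x hx y hy h
    have hx1 : (1:ℝ) + x ≠ 0 := by have := mem_Ioi.mp hx; positivity
    have hy1 : (1:ℝ) + y ≠ 0 := by have := mem_Ioi.mp hy; positivity
    have : (1:ℝ) + x = 1 + y := by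
      simpa [hx1, hy1] using (inv_inj.mp h)
    linarith
  have key := integral_image_eq_integral_abs_deriv_smul measurableSet_Ioi hderiv hinj
    (fun s : ℝ => s ^ (b - 1) * (1 - s) ^ (a - 1))
  rw [himg, real_beta hb ha] at key
  have hcongr : ∫ x in Ioi (0:ℝ), |(-(((1 + x) ^ 2)⁻¹))| • ((1 + x)⁻¹ ^ (b - 1) * (1 - (1 + x)⁻¹) ^ (a - 1))
      = ∫ u in Ioi (0:ℝ), u ^ (a - 1) * (1 + u) ^ (-(a + b)) := by
    refine setIntegral_congr_fun measurableSet_Ioi fun u hu => ?_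
    have hu0 : (0:ℝ) < u := mem_Ioi.mp hu
    have h1 : (0:ℝ) < 1 + u := by linarith
    have h2 : (1:ℝ) - (1 + u)⁻¹ = u * (1 + u)⁻¹ := by field_simp; ring
    rw [smul_eq_mul, abs_neg, abs_inv, abs_of_nonneg (by positivity : (0:ℝ) ≤ (1+u)^2), h2,
      Real.mul_rpow hu0.le (by positivity), ← Real.rpow_natCast ((1+u)) 2, ← Real.rpow_neg h1.le,
      ← Real.rpow_neg_one (1+u), ← Real.rpow_mul h1.le, ← Real.rpow_mul h1.le,
      show -(a+b) = (-(2:ℝ) + -1*(b-1)) + -1*(a-1) by ring,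
      Real.rpow_add h1, Real.rpow_add h1]
    push_cast
    ring
  rw [← hcongr, ← key, add_comm b a, mul_comm (Real.Gamma b)]

lemma step_sq (p q : ℝ) :
    ∫ t in Ioi (0:ℝ), t ^ p * (1 + t ^ 2) ^ (-q)
      = (1/2) * ∫ u in Ioi (0:ℝ), u ^ ((p-1)/2) * (1 + u) ^ (-q) := by
  have h := integral_comp_rpow_Ioi_of_pos
    (g := fun u : ℝ => (1/2) * (u ^ ((p-1)/2) * (1 + u) ^ (-q))) (p := 2) two_pos
  simp only [smul_eq_mul] at h
  rw [← integral_const_mul, ← h]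
  refine setIntegral_congr_fun measurableSet_Ioi fun x hx => ?_
  have hx0 : (0:ℝ) < x := mem_Ioi.mp hx
  have h2 : x ^ (2:ℝ) = x ^ (2:ℕ) := by
    rw [← Real.rpow_natCast x 2]; norm_num
  have h3 : (x ^ (2:ℝ)) ^ ((p-1)/2) = x ^ (p - 1) := by
    rw [← Real.rpow_mul hx0.le, show (2:ℝ)*((p-1)/2) = p-1 by ring]
  have h4 : x ^ p = x ^ (1:ℝ) * x ^ (p - 1) := by
    rw [← Real.rpow_add hx0]; norm_num
  rw [show (2:ℝ) - 1 = 1 by norm_num] at *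
  rw [← h2, h4, Real.rpow_one, h3]
  ring

lemma final_alg (N : ℕ) (hN3 : (3:ℝ) ≤ (N:ℝ)) {c : ℝ} (hc : 0 < c) :
    (N:ℝ) * (√π ^ N / Real.Gamma ((N:ℝ)/2 + 1)
        * (√c ^ N * (1/2 * (Real.Gamma ((N:ℝ)/2) * Real.Gamma ((N:ℝ)/2 - 1) / Real.Gamma ((N:ℝ)-1)))))
      = 2*((N:ℝ)-1)/((N:ℝ)-2) * π ^ (((N:ℝ)+1)/2) * 2 ^ (1-(N:ℝ)) * c ^ ((N:ℝ)/2)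
        / Real.Gamma (((N:ℝ)+1)/2) := by
  have hsqc : √c ^ N = c ^ ((N:ℝ)/2) := by
    rw [← Real.rpow_natCast (√c) N, Real.sqrt_eq_rpow, ← Real.rpow_mul hc.le,
      show 1/2*((N:ℕ):ℝ) = (N:ℝ)/2 by push_cast; ring]
  have hsqpi : √π ^ N = π ^ ((N:ℝ)/2) := by
    rw [← Real.rpow_natCast (√π) N, Real.sqrt_eq_rpow, ← Real.rpow_mul pi_pos.le,
      show 1/2*((N:ℕ):ℝ) = (N:ℝ)/2 by push_cast; ring]
  have hpi2 : π ^ (((N:ℝ)+1)/2) = π ^ ((N:ℝ)/2) * √π := by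
    rw [Real.sqrt_eq_rpow, ← Real.rpow_add pi_pos, show (N:ℝ)/2+1/2 = ((N:ℝ)+1)/2 by ring]
  have h2 : (2:ℝ) ^ (1-(N:ℝ)) = 2 ^ (2-(N:ℝ)) * (1/2) := by
    rw [show (1:ℝ) - (N:ℝ) = (2 - (N:ℝ)) + (-1) by ring, Real.rpow_add two_pos,
      Real.rpow_neg_one]
    norm_num
  have hG1 : Real.Gamma ((N:ℝ)/2 + 1) = ((N:ℝ)/2) * Real.Gamma ((N:ℝ)/2) :=
    Real.Gamma_add_one (by positivity)
  have hG2 : Real.Gamma ((N:ℝ)/2) = ((N:ℝ)/2-1) * Real.Gamma ((N:ℝ)/2-1) := by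
    have := Real.Gamma_add_one (show (N:ℝ)/2-1 ≠ 0 from ne_of_gt (by linarith))
    rwa [show (N:ℝ)/2-1+1 = (N:ℝ)/2 by ring] at this
  have hG3 : Real.Gamma (((N:ℝ)+1)/2) = (((N:ℝ)-1)/2) * Real.Gamma (((N:ℝ)-1)/2) := by
    have := Real.Gamma_add_one (show ((N:ℝ)-1)/2 ≠ 0 from ne_of_gt (by linarith))
    rwa [show ((N:ℝ)-1)/2+1 = ((N:ℝ)+1)/2 by ring] at this
  have hdup : Real.Gamma (((N:ℝ)-1)/2) * Real.Gamma ((N:ℝ)/2)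
      = Real.Gamma ((N:ℝ)-1) * 2 ^ (2-(N:ℝ)) * √π := by
    have := Real.Gamma_mul_Gamma_add_half (((N:ℝ)-1)/2)
    rwa [show ((N:ℝ)-1)/2+1/2 = (N:ℝ)/2 by ring, show 2*(((N:ℝ)-1)/2) = (N:ℝ)-1 by ring,
      show (1:ℝ)-((N:ℝ)-1) = 2-(N:ℝ) by ring] at this
  have p1 : 0 < Real.Gamma ((N:ℝ)/2) := Real.Gamma_pos_of_pos (by linarith)
  have p2 : 0 < Real.Gamma (((N:ℝ)-1)/2) := Real.Gamma_pos_of_pos (by linarith)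
  have p3 : 0 < Real.Gamma ((N:ℝ)-1) := Real.Gamma_pos_of_pos (by linarith)
  have p4 : 0 < Real.Gamma ((N:ℝ)/2-1) := Real.Gamma_pos_of_pos (by linarith)
  have p5 : (0:ℝ) < 2 ^ (2-(N:ℝ)) := Real.rpow_pos_of_pos two_pos _
  have p6 : (0:ℝ) < √π := Real.sqrt_pos.mpr pi_pos
  have p7 : (0:ℝ) < π ^ ((N:ℝ)/2) := Real.rpow_pos_of_pos pi_pos _
  have p8 : (0:ℝ) < c ^ ((N:ℝ)/2) := Real.rpow_pos_of_pos hc _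
  have hne : (N:ℝ) - 2 ≠ 0 := by linarith
  have hN1 : ((N:ℝ)-1) ≠ 0 := by linarith
  have hD : Real.Gamma ((N:ℝ)-1)
      = Real.Gamma (((N:ℝ)-1)/2) * Real.Gamma ((N:ℝ)/2) / (2 ^ (2-(N:ℝ)) * √π) := by
    rw [eq_div_iff (mul_pos p5 p6).ne', hdup]; ring
  rw [hsqc, hsqpi, hpi2, h2, hG1, hG3, hD, hG2]
  set K := Real.Gamma ((N:ℝ)/2-1) with hKdef
  set G := Real.Gamma (((N:ℝ)-1)/2) with hGdef
  set P := π ^ ((N:ℝ)/2) with hPdef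
  set C := c ^ ((N:ℝ)/2) with hCdef
  set t := (2:ℝ) ^ (2-(N:ℝ)) with htdef
  set s := √π with hsdef
  have hNne : (N:ℝ) ≠ 0 := by linarith
  have hhalf : (N:ℝ)/2 - 1 ≠ 0 := by intro h; nlinarith
  field_simp

/-- `∫_{ℝ^N} U^{2(N−1)/(N−2)} = (2(N−1)/(N−2))·π^((N+1)/2)·2^(1−N)·[N(N−2)]^(N/2)/Γ((N+1)/2)`. -/
theorem stmt_8 (N : ℕ) (hN : 3 ≤ N) :
    ∫ x : EuclideanSpace ℝ (Fin N), talenti N x ^ (2 * ((N : ℝ) - 1) / ((N : ℝ) - 2))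
      = (2 * ((N : ℝ) - 1) / ((N : ℝ) - 2)) * Real.pi ^ (((N : ℝ) + 1) / 2) * 2 ^ (1 - (N : ℝ))
          * ((N : ℝ) * ((N : ℝ) - 2)) ^ ((N : ℝ) / 2) / Real.Gamma (((N : ℝ) + 1) / 2) := by
  have hN3 : (3:ℝ) ≤ (N:ℝ) := by exact_mod_cast hN
  set c : ℝ := (N:ℝ) * ((N:ℝ) - 2) with hcdef
  have hc : 0 < c := mul_pos (by linarith) (by linarith)
  -- Step 1: integrand identity
  have hint : ∀ x : EuclideanSpace ℝ (Fin N),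
      talenti N x ^ (2 * ((N : ℝ) - 1) / ((N : ℝ) - 2))
        = (c / (c + ‖x‖ ^ 2)) ^ (N - 1 : ℕ) := by
    intro x
    have hbase : (0:ℝ) ≤ c / (c + ‖x‖ ^ 2) := by positivity
    rw [talenti, ← hcdef, ← Real.rpow_mul hbase, ← Real.rpow_natCast (c / (c + ‖x‖^2)) (N-1)]
    congr 1
    have : ((N - 1 : ℕ) : ℝ) = (N:ℝ) - 1 := by
      have : (1:ℕ) ≤ N := by omega
      push_cast [Nat.cast_sub this]; ring
    rw [this]
    have hne : (N:ℝ) - 2 ≠ 0 := by linarith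
    field_simp [hne]
  simp only [hint]
  -- Step 2: polar coordinates
  haveI : Nonempty (Fin N) := Fin.pos_iff_nonempty.mp (by omega)
  haveI : Nontrivial (EuclideanSpace ℝ (Fin N)) := by
    refine ⟨0, EuclideanSpace.single ⟨0, by omega⟩ 1, ?_⟩
    intro h
    have := congrArg (fun v : EuclideanSpace ℝ (Fin N) => v ⟨0, by omega⟩) h.symm
    simp [EuclideanSpace.single] at this
  have hpolar := MeasureTheory.integral_fun_norm_addHaar
    (volume : Measure (EuclideanSpace ℝ (Fin N)))
    (fun r : ℝ => ((c / (c + r ^ 2)) ^ (N - 1 : ℕ) : ℝ))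
  rw [finrank_euclideanSpace, Fintype.card_fin] at hpolar
  rw [hpolar]
  -- ball volume
  have hball : ((volume : Measure (EuclideanSpace ℝ (Fin N))) (Metric.ball 0 1)).toReal
      = √π ^ N / Real.Gamma ((N:ℝ)/2 + 1) := by
    rw [EuclideanSpace.volume_ball, Fintype.card_fin]
    rw [ENNReal.toReal_mul]
    simp [ENNReal.toReal_ofReal (by positivity : (0:ℝ) ≤ √π ^ N / Real.Gamma ((N:ℝ)/2 + 1))]
  rw [measureReal_def, hball]
  -- Step 3: scaling y = √c x
  have hsc : (0:ℝ) < √c := Real.sqrt_pos.mpr hc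
  have hscale := MeasureTheory.integral_comp_mul_left_Ioi
    (fun y : ℝ => y ^ (N-1:ℕ) * ((c/(c+y^2))^(N-1:ℕ) : ℝ)) 0 hsc
  rw [mul_zero] at hscale
  have hgcomp : ∀ x ∈ Ioi (0:ℝ),
      (√c * x) ^ (N-1:ℕ) * ((c/(c+(√c * x)^2))^(N-1:ℕ) : ℝ)
        = (√c) ^ (N-1:ℕ) * (x ^ (N-1:ℕ) * ((1+x^2) ^ (N-1:ℕ))⁻¹) := by
    intro x hx
    have h1 : (√c * x) ^ 2 = c * x ^ 2 := by
      rw [mul_pow, Real.sq_sqrt hc.le]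
    have h2 : c + c * x ^ 2 = c * (1 + x^2) := by ring
    have h3 : c / (c * (1 + x^2)) = (1 + x^2)⁻¹ := by
      rw [div_eq_iff (by positivity)]
      field_simp
    rw [h1, h2, h3, mul_pow, inv_pow]; ring
  have hR : (∫ y in Ioi (0:ℝ), y ^ (N-1:ℕ) • ((c/(c+y^2))^(N-1:ℕ) : ℝ))
      = (√c) ^ N * ∫ x in Ioi (0:ℝ), x ^ (N-1:ℕ) * ((1+x^2) ^ (N-1:ℕ))⁻¹ := by
    simp only [smul_eq_mul]
    rw [show (∫ y in Ioi (0:ℝ), y ^ (N-1:ℕ) * ((c/(c+y^2))^(N-1:ℕ) : ℝ))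
        = √c * ((√c)⁻¹ • ∫ y in Ioi (0:ℝ), y ^ (N-1:ℕ) * ((c/(c+y^2))^(N-1:ℕ) : ℝ)) by
          rw [smul_eq_mul, ← mul_assoc, mul_inv_cancel₀ hsc.ne', one_mul]]
    rw [← hscale, setIntegral_congr_fun measurableSet_Ioi hgcomp, integral_const_mul,
      ← mul_assoc, ← pow_succ']
    congr 2
    omega
  have hK : (∫ x in Ioi (0:ℝ), x ^ (N-1:ℕ) * (((1+x^2) ^ (N-1:ℕ))⁻¹ : ℝ))
      = (1/2) * (Real.Gamma ((N:ℝ)/2) * Real.Gamma ((N:ℝ)/2 - 1) / Real.Gamma ((N:ℝ)-1)) := by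
    have hcast : ((N - 1 : ℕ) : ℝ) = (N:ℝ) - 1 := by
      have h1 : (1:ℕ) ≤ N := by omega
      push_cast [Nat.cast_sub h1]; ring
    have hconv : (∫ x in Ioi (0:ℝ), x ^ (N-1:ℕ) * (((1+x^2) ^ (N-1:ℕ))⁻¹ : ℝ))
        = ∫ x in Ioi (0:ℝ), x ^ ((N:ℝ)-1) * (1+x^2) ^ (-((N:ℝ)-1)) := by
      refine setIntegral_congr_fun measurableSet_Ioi fun x hx => ?_
      have hx0 : (0:ℝ) < x := mem_Ioi.mp hx
      have hpos : (0:ℝ) < 1 + x^2 := by positivity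
      rw [← Real.rpow_natCast x (N-1), ← Real.rpow_natCast (1+x^2) (N-1), hcast,
        ← Real.rpow_neg hpos.le]
    rw [hconv, step_sq ((N:ℝ)-1) ((N:ℝ)-1)]
    have e1 : ((N:ℝ)-1-1)/2 = (N:ℝ)/2 - 1 := by ring
    have e2 : -((N:ℝ)-1) = -((N:ℝ)/2 + ((N:ℝ)/2 - 1)) := by ring
    rw [e1, e2, beta_Ioi (by linarith) (by linarith),
      show (N:ℝ)/2 + ((N:ℝ)/2 - 1) = (N:ℝ) - 1 by ring]
  simp only [smul_eq_mul] at hR ⊢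
  rw [hR, hK, nsmul_eq_mul]
  exact final_alg N hN3 hc
end

section
/- For every integer N ≥ 3, ∫_{ℝ^N} U(x)^{2(N−1)/(N−2)} dx = (2(N−1)/(N−2)) · ∫_{ℝ^N} U(x)^{2N/(N−2)} dx. -/
set_option maxHeartbeats 1000000

open Real MeasureTheory

open Set Filter Topology Metric in
private lemma aux_integrable (a : ℝ) (ha : 0 < a) (n p : ℕ) (hp : n + 2 ≤ 2 * p) :
    IntegrableOn (fun r : ℝ => r ^ n / (a + r ^ 2) ^ p) (Ioi 0) := by
  have hpos : ∀ r : ℝ, 0 < a + r ^ 2 := fun r => by positivity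
  have hcont : Continuous (fun r : ℝ => r ^ n / (a + r ^ 2) ^ p) := by
    apply Continuous.div (by continuity) (by continuity)
    exact fun r => pow_ne_zero _ (hpos r).ne'
  have h1 : IntegrableOn (fun r : ℝ => r ^ n / (a + r ^ 2) ^ p) (Ioc 0 1) :=
    hcont.integrableOn_Ioc
  have h2 : IntegrableOn (fun r : ℝ => r ^ n / (a + r ^ 2) ^ p) (Ioi 1) := by
    have hint : IntegrableOn (fun r : ℝ => r ^ ((n : ℝ) - 2 * p)) (Ioi 1) :=
      by
      have hp' : (n:ℝ) + 2 ≤ 2*p := by exact_mod_cast hp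
      exact integrableOn_Ioi_rpow_of_lt (by linarith) one_pos
    refine hint.mono' (hcont.aestronglyMeasurable.restrict) ?_
    filter_upwards [ae_restrict_mem measurableSet_Ioi] with r hr
    have hr1 : (1:ℝ) ≤ r := le_of_lt hr
    have hr0 : (0:ℝ) < r := lt_of_lt_of_le one_pos hr1
    rw [Real.norm_eq_abs, abs_of_nonneg (by positivity)]
    have : r ^ ((n : ℝ) - 2 * p) = r ^ n / r ^ (2 * p) := by
      rw [Real.rpow_sub hr0, ← Real.rpow_natCast r n, ← Real.rpow_natCast r (2*p)]
      norm_num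
    rw [this]
    apply div_le_div_of_nonneg_left (by positivity) (by positivity)
    calc r ^ (2 * p) = (r ^ 2) ^ p := by rw [pow_mul]
    _ ≤ (a + r ^ 2) ^ p := by
        apply pow_le_pow_left₀ (by positivity)
        linarith
  have : Ioi (0:ℝ) = Ioc 0 1 ∪ Ioi 1 := by
    rw [Ioc_union_Ioi_eq_Ioi]; norm_num
  rw [this]
  exact h1.union h2

open Set Filter Topology Metric in
private lemma key1d (a : ℝ) (ha : 0 < a) (m : ℕ) :
    ((m:ℝ) + 1) * ∫ r in Ioi (0:ℝ), r ^ (m+2) / (a + r ^ 2) ^ (m+2)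
      = 2 * a * ((m:ℝ) + 2) * ∫ r in Ioi (0:ℝ), r ^ (m+2) / (a + r ^ 2) ^ (m+3) := by
  have hpos : ∀ r : ℝ, 0 < a + r ^ 2 := fun r => by positivity
  set g : ℝ → ℝ := fun r => r ^ (m+3) / (a + r ^ 2) ^ (m+2) with hg
  set F : ℝ → ℝ := fun r =>
    2 * a * ((m:ℝ) + 2) * (r ^ (m+2) / (a + r ^ 2) ^ (m+3))
      - ((m:ℝ) + 1) * (r ^ (m+2) / (a + r ^ 2) ^ (m+2)) with hF
  have hI1 : IntegrableOn (fun r : ℝ => r ^ (m+2) / (a + r ^ 2) ^ (m+2)) (Ioi 0) :=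
    aux_integrable a ha (m+2) (m+2) (by omega)
  have hI2 : IntegrableOn (fun r : ℝ => r ^ (m+2) / (a + r ^ 2) ^ (m+3)) (Ioi 0) :=
    aux_integrable a ha (m+2) (m+3) (by omega)
  have hFint : IntegrableOn F (Ioi 0) := (hI2.const_mul _).sub (hI1.const_mul _)
  have hderiv : ∀ r ∈ Ici (0:ℝ), HasDerivAt g (F r) r := by
    intro r _
    have h1 : HasDerivAt (fun r : ℝ => r ^ (m+3)) (((m:ℝ)+3) * r ^ (m+2)) r := by
      have := hasDerivAt_pow (m+3) r
      simpa [Nat.add_sub_cancel] using this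
    have h2 : HasDerivAt (fun r : ℝ => ((a + r ^ 2) ^ (m+2) : ℝ))
        ((((m:ℝ)+2) * (a + r ^ 2) ^ (m+1)) * (2 * r)) r := by
      have hv : HasDerivAt (fun r : ℝ => a + r ^ 2) (2 * r) r := by
        simpa using ((hasDerivAt_pow 2 r).const_add a)
      have := (hasDerivAt_pow (m+2) (a + r ^ 2)).comp r hv
      simpa [Nat.add_sub_cancel, mul_comm, mul_assoc, Function.comp_def] using this
    have hne : ((a + r ^ 2) ^ (m+2) : ℝ) ≠ 0 := pow_ne_zero _ (hpos r).ne'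
    have := h1.div h2 hne
    refine HasDerivAt.congr_deriv (f := g) this ?_
    rw [hF]
    field_simp
    ring
  have htop : Tendsto g atTop (𝓝 0) := by
    have hbound : ∀ᶠ r in atTop, ‖g r‖ ≤ (r ^ (m+1))⁻¹ := by
      filter_upwards [eventually_ge_atTop (1:ℝ)] with r hr
      have hr0 : (0:ℝ) < r := lt_of_lt_of_le one_pos hr
      rw [Real.norm_eq_abs, abs_of_nonneg (by positivity)]
      rw [hg]
      rw [div_le_iff₀ (by positivity)]
      calc r ^ (m+3) = (r ^ (m+1))⁻¹ * r ^ (2*(m+2)) := by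
            have h : r ^ (2*(m+2)) = r ^ (m+1) * r ^ (m+3) := by
              rw [← pow_add]; congr 1; omega
            rw [h, inv_mul_cancel_left₀ (by positivity)]
      _ = (r ^ (m+1))⁻¹ * (r ^ 2) ^ (m+2) := by rw [pow_mul]
      _ ≤ (r ^ (m+1))⁻¹ * (a + r ^ 2) ^ (m+2) := by
            apply mul_le_mul_of_nonneg_left _ (by positivity)
            exact pow_le_pow_left₀ (by positivity) (by linarith) _
    have h0 : Tendsto (fun r : ℝ => (r ^ (m+1))⁻¹) atTop (𝓝 0) :=
      (tendsto_pow_atTop (by omega)).inv_tendsto_atTop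
    exact squeeze_zero_norm' hbound h0
  have key := integral_Ioi_of_hasDerivAt_of_tendsto' hderiv hFint htop
  have hg0 : g 0 = 0 := by simp [hg]
  rw [hg0, sub_zero] at key
  have hsplit : ∫ r in Ioi (0:ℝ), F r
      = 2 * a * ((m:ℝ) + 2) * (∫ r in Ioi (0:ℝ), r ^ (m+2) / (a + r ^ 2) ^ (m+3))
        - ((m:ℝ) + 1) * (∫ r in Ioi (0:ℝ), r ^ (m+2) / (a + r ^ 2) ^ (m+2)) := by
    rw [hF]
    rw [integral_sub (hI2.const_mul _) (hI1.const_mul _),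
        integral_const_mul, integral_const_mul]
  rw [hsplit] at key
  linarith

open Set Filter Topology Metric in
/-- `∫_{ℝ^N} U^{2(N−1)/(N−2)} = (2(N−1)/(N−2))·∫_{ℝ^N} U^{2N/(N−2)}`. -/
theorem stmt_9 (N : ℕ) (hN : 3 ≤ N) :
    ∫ x : EuclideanSpace ℝ (Fin N), talenti N x ^ (2 * ((N : ℝ) - 1) / ((N : ℝ) - 2))
      = (2 * ((N : ℝ) - 1) / ((N : ℝ) - 2))
          * ∫ x : EuclideanSpace ℝ (Fin N), talenti N x ^ (2 * (N : ℝ) / ((N : ℝ) - 2)) := by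
  obtain ⟨m, rfl⟩ : ∃ m, N = m + 3 := ⟨N - 3, by omega⟩
  set a : ℝ := ((m:ℝ)+3) * ((m:ℝ)+1) with hadef
  have ha : 0 < a := by positivity
  have hax : ∀ x : EuclideanSpace ℝ (Fin (m+3)), (0:ℝ) < a + ‖x‖^2 := fun x => by positivity
  have hm1 : (m:ℝ) + 1 ≠ 0 := by positivity
  -- pointwise identities
  have hpt : ∀ (x : EuclideanSpace ℝ (Fin (m+3))) (k : ℕ),
      talenti (m+3) x ^ (2 * (k:ℝ) / ((m:ℝ)+1)) = (a / (a + ‖x‖^2)) ^ k := by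
    intro x k
    have hy : (0:ℝ) ≤ a / (a + ‖x‖^2) := le_of_lt (div_pos ha (hax x))
    have hbase : ((m+3:ℕ) : ℝ) * (((m+3:ℕ):ℝ) - 2) = a := by push_cast [hadef]; ring
    have ht : talenti (m+3) x = (a / (a + ‖x‖^2)) ^ (((m:ℝ)+1)/2) := by
      rw [talenti, hbase]
      congr 1
      push_cast; ring
    rw [ht, ← Real.rpow_natCast (a / (a + ‖x‖^2)) k, ← Real.rpow_mul hy]
    congr 1
    field_simp
  -- rewrite exponents
  have hcast : ((m+3:ℕ) : ℝ) = (m:ℝ) + 3 := by push_cast; ring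
  have he1 : 2 * (((m+3:ℕ):ℝ) - 1) / (((m+3:ℕ):ℝ) - 2) = 2 * ((m+2:ℕ):ℝ) / ((m:ℝ)+1) := by
    rw [hcast]; push_cast; ring_nf
  have he2 : 2 * ((m+3:ℕ):ℝ) / (((m+3:ℕ):ℝ) - 2) = 2 * ((m+3:ℕ):ℝ) / ((m:ℝ)+1) := by
    rw [hcast]; ring_nf
  -- reduce to radial integrals
  haveI : Nonempty (Fin (m+3)) := ⟨⟨0, by omega⟩⟩
  have hdim : Module.finrank ℝ (EuclideanSpace ℝ (Fin (m+3))) = m + 3 := by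
    simp [finrank_euclideanSpace]
  haveI hnt : Nontrivial (EuclideanSpace ℝ (Fin (m+3))) := by
    apply Module.nontrivial_of_finrank_pos (R := ℝ)
    rw [hdim]; omega
  have hred : ∀ k : ℕ,
      ∫ x : EuclideanSpace ℝ (Fin (m+3)), (a / (a + ‖x‖^2)) ^ k
        = (m+3) • (volume (ball (0:EuclideanSpace ℝ (Fin (m+3))) 1)).toReal •
            (a ^ k * ∫ r in Ioi (0:ℝ), r ^ (m+2) / (a + r ^ 2) ^ k) := by
    intro k
    have := MeasureTheory.integral_fun_norm_addHaar
      (volume : Measure (EuclideanSpace ℝ (Fin (m+3)))) (fun r : ℝ => (a / (a + r^2)) ^ k)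
    rw [hdim] at this
    rw [this]
    congr 2
    rw [← integral_const_mul]
    apply setIntegral_congr_fun measurableSet_Ioi
    intro r hr
    have h2 : (0:ℝ) < a + r^2 := by positivity
    have h3 : m + 3 - 1 = m + 2 := by omega
    simp only [smul_eq_mul, div_pow, h3]
    field_simp
  rw [he1, he2]
  calc ∫ x : EuclideanSpace ℝ (Fin (m+3)), talenti (m+3) x ^ (2 * ((m+2:ℕ):ℝ) / ((m:ℝ)+1))
      = ∫ x : EuclideanSpace ℝ (Fin (m+3)), (a / (a + ‖x‖^2)) ^ (m+2) := by
        exact integral_congr_ae (Eventually.of_forall fun x => hpt x (m+2))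
    _ = (m+3) • (volume (ball (0:EuclideanSpace ℝ (Fin (m+3))) 1)).toReal •
            (a ^ (m+2) * ∫ r in Ioi (0:ℝ), r ^ (m+2) / (a + r ^ 2) ^ (m+2)) := hred (m+2)
    _ = 2 * ((m+2:ℕ):ℝ) / ((m:ℝ)+1) * ((m+3) • (volume (ball (0:EuclideanSpace ℝ (Fin (m+3))) 1)).toReal •
            (a ^ (m+3) * ∫ r in Ioi (0:ℝ), r ^ (m+2) / (a + r ^ 2) ^ (m+3))) := by
        rw [nsmul_eq_mul, nsmul_eq_mul, smul_eq_mul, smul_eq_mul]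
        have key := key1d a ha m
        have hI : ∫ r in Ioi (0:ℝ), r ^ (m+2) / (a + r ^ 2) ^ (m+2)
            = 2 * a * ((m:ℝ) + 2) / ((m:ℝ)+1) * ∫ r in Ioi (0:ℝ), r ^ (m+2) / (a + r ^ 2) ^ (m+3) := by
          field_simp
          linarith [key]
        rw [hI]
        push_cast
        ring
    _ = 2 * ((m+2:ℕ):ℝ) / ((m:ℝ)+1) * ∫ x : EuclideanSpace ℝ (Fin (m+3)), (a / (a + ‖x‖^2)) ^ (m+3) := by
        rw [hred (m+3)]
    _ = 2 * ((m+2:ℕ):ℝ) / ((m:ℝ)+1) * ∫ x : EuclideanSpace ℝ (Fin (m+3)),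
          talenti (m+3) x ^ (2 * ((m+3:ℕ):ℝ) / ((m:ℝ)+1)) := by
        congr 1
        exact (integral_congr_ae (Eventually.of_forall fun x => hpt x (m+3))).symm
end

section
/- Let N ≥ 3 be an integer and let Ω ⊂ ℝ^N be a bounded measurable set. Then there exists a constant c₂ > 0 (depending only on N and Ω) such that for every ε ∈ (0,1/2] and every y ∈ ℝ^N, ∫_Ω U_{ε,y}(x)^{N/(N−2)} dx ≤ c₂ · ε^{N/2} · |log ε|. -/
open Real MeasureTheory
open ENNReal

/-- The rescaled instanton `U_{ε,y}(x) = ε^(−(N−2)/2)·U((x−y)/ε)`. -/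
noncomputable def talentiRescaled (N : ℕ) (ε : ℝ) (y x : EuclideanSpace ℝ (Fin N)) : ℝ :=
  ε ^ (-(((N : ℝ) - 2) / 2)) * talenti N (ε⁻¹ • (x - y))

lemma talenti_pow_eq (N : ℕ) (hN : 3 ≤ N) {ε : ℝ} (hε : 0 < ε)
    (y x : EuclideanSpace ℝ (Fin N)) :
    talentiRescaled N ε y x ^ ((N : ℝ) / ((N : ℝ) - 2)) =
      ((N:ℝ) * ((N:ℝ) - 2)) ^ ((N:ℝ)/2) * ε ^ ((N:ℝ)/2) *
        ((N:ℝ) * ((N:ℝ) - 2) * ε^2 + ‖x - y‖^2) ^ (-((N:ℝ)/2)) := by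
  have hs : (3:ℝ) ≤ (N:ℝ) := by exact_mod_cast hN
  set s := (N:ℝ) with hs_def
  set a := s * (s - 2) with ha_def
  have ha : 0 < a := by nlinarith
  have ht : (0:ℝ) ≤ ‖x - y‖^2 := sq_nonneg _
  have hD : 0 < a * ε^2 + ‖x-y‖^2 := by positivity
  have hnorm : ‖ε⁻¹ • (x - y)‖^2 = ε⁻¹^2 * ‖x - y‖^2 := by
    rw [norm_smul, norm_inv, Real.norm_eq_abs, abs_of_pos hε, mul_pow]
  have hbase : a / (a + ‖ε⁻¹ • (x - y)‖^2) = a * ε^2 / (a * ε^2 + ‖x-y‖^2) := by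
    rw [hnorm]
    rw [div_eq_div_iff (by positivity) hD.ne']
    field_simp
  have hbase_pos : 0 < a * ε^2 / (a * ε^2 + ‖x-y‖^2) := by positivity
  simp only [talentiRescaled, talenti]
  rw [← hs_def, ← ha_def, hbase]
  rw [Real.rpow_def_of_pos hε, Real.rpow_def_of_pos hbase_pos, ← Real.exp_add,
    Real.rpow_def_of_pos (Real.exp_pos _), Real.log_exp,
    Real.rpow_def_of_pos ha, Real.rpow_def_of_pos hε, Real.rpow_def_of_pos hD,
    ← Real.exp_add, ← Real.exp_add]
  congr 1
  have hlog : Real.log (a * ε^2 / (a*ε^2+‖x-y‖^2)) =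
      Real.log a + 2 * Real.log ε - Real.log (a*ε^2+‖x-y‖^2) := by
    rw [Real.log_div (by positivity) hD.ne', Real.log_mul ha.ne' (pow_ne_zero 2 hε.ne'),
      Real.log_pow]
    push_cast; ring
  rw [hlog]
  have h2 : s - 2 ≠ 0 := by nlinarith
  field_simp
  ring

lemma lintegral_biUnion_range_le {α : Type*} [MeasurableSpace α] (μ : Measure α)
    (f : α → ℝ≥0∞) (A : ℕ → Set α) (n : ℕ) :
    ∫⁻ x in ⋃ k ∈ Finset.range n, A k, f x ∂μ ≤ ∑ k ∈ Finset.range n, ∫⁻ x in A k, f x ∂μ := by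
  induction n with
  | zero => simp
  | succ n ih =>
      have hset : ⋃ k ∈ Finset.range (n+1), A k = (⋃ k ∈ Finset.range n, A k) ∪ A n := by
        rw [Finset.range_add_one]
        simp [Set.biUnion_insert, Set.union_comm]
      rw [hset, Finset.sum_range_succ]
      exact (lintegral_union_le _ _ _).trans (add_le_add ih le_rfl)

set_option maxHeartbeats 1000000 in
/-- Brézis–Nirenberg borderline estimate (upper bound in (4.3) of the paper):
there is `c₂ > 0` with `∫_Ω U_{ε,y}^(N/(N−2)) ≤ c₂·ε^(N/2)·|log ε|` for all
`ε ∈ (0,1/2]`, `y ∈ ℝ^N`. -/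
theorem stmt_14 (N : ℕ) (hN : 3 ≤ N) (Ω : Set (EuclideanSpace ℝ (Fin N)))
    (hΩb : Bornology.IsBounded Ω) (hΩm : MeasurableSet Ω) :
    ∃ c₂ > (0 : ℝ), ∀ ε ∈ Set.Ioc (0 : ℝ) (1 / 2), ∀ y : EuclideanSpace ℝ (Fin N),
      ∫ x in Ω, talentiRescaled N ε y x ^ ((N : ℝ) / ((N : ℝ) - 2))
        ≤ c₂ * ε ^ ((N : ℝ) / 2) * |Real.log ε| := by
  have hs : (3:ℝ) ≤ (N:ℝ) := by exact_mod_cast hN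
  haveI : NeZero N := ⟨by omega⟩
  set a : ℝ := (N:ℝ) * ((N:ℝ) - 2) with ha_def
  have ha : 0 < a := by nlinarith
  have ha1 : 1 ≤ a := by nlinarith
  set V1 : ℝ≥0∞ := volume (Metric.ball (0:EuclideanSpace ℝ (Fin N)) 1) with hV1_def
  set v : ℝ := V1.toReal with hv_def
  set w : ℝ := (volume Ω).toReal with hw_def
  have hv0 : 0 ≤ v := ENNReal.toReal_nonneg
  have hw0 : 0 ≤ w := ENNReal.toReal_nonneg
  have hVlt : V1 ≠ ⊤ := measure_ball_lt_top.ne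
  have hΩlt : volume Ω ≠ ⊤ := hΩb.measure_lt_top.ne
  have hlog2 : (0:ℝ) < Real.log 2 := Real.log_pos one_lt_two
  set c : ℝ := (v + w) / Real.log 2 + 5 * 2^N * v + 1 with hc_def
  have hc : 0 < c := by positivity
  refine ⟨a ^ ((N:ℝ)/2) * c, by positivity, ?_⟩
  rintro ε ⟨hε, hε2⟩ y
  set L : ℝ := |Real.log ε| with hL_def
  have hεlt1 : ε < 1 := lt_of_le_of_lt hε2 (by norm_num)
  have hlogε : Real.log ε < 0 := Real.log_neg hε hεlt1
  have hLeq : L = - Real.log ε := abs_of_neg hlogε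
  have hL2 : Real.log 2 ≤ L := by
    have h1 : Real.log ε ≤ Real.log (1/2) := Real.log_le_log hε hε2
    rw [one_div, Real.log_inv] at h1
    rw [hLeq]; linarith
  have hL0 : 0 < L := lt_of_lt_of_le hlog2 hL2
  set K : ℕ := ⌈L / Real.log 2⌉₊ with hK_def
  have hKge : L / Real.log 2 ≤ K := Nat.le_ceil _
  have hKlt : (K:ℝ) < L / Real.log 2 + 1 := Nat.ceil_lt_add_one (by positivity)
  have hK2 : ε⁻¹ ≤ (2:ℝ)^K := by
    have h1 : L ≤ K * Real.log 2 := by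
      rw [div_le_iff₀ hlog2] at hKge; linarith
    calc ε⁻¹ = Real.exp L := by
          rw [hLeq, Real.exp_neg, Real.exp_log hε]
      _ ≤ Real.exp ((K:ℝ) * Real.log 2) := Real.exp_le_exp.mpr h1
      _ = (2:ℝ)^K := by rw [Real.exp_nat_mul, Real.exp_log two_pos]
  have hK5 : (K:ℝ) + 1 ≤ 5 * L := by
    have hA : ((K:ℝ)) * Real.log 2 < L + Real.log 2 := by
      have h := mul_lt_mul_of_pos_right hKlt hlog2
      rw [add_mul, div_mul_cancel₀ _ hlog2.ne', one_mul] at h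
      exact h
    nlinarith [Real.log_two_gt_d9, Real.log_two_lt_d9, hL2, hA]
  -- key estimate
  have hKEY : ∫ x in Ω, (a*ε^2 + ‖x - y‖^2) ^ (-((N:ℝ)/2)) ≤ c * L := by
    set g : EuclideanSpace ℝ (Fin N) → ℝ := fun x => (a*ε^2 + ‖x - y‖^2) ^ (-((N:ℝ)/2)) with hg_def
    have hg0 : ∀ x, 0 ≤ g x := fun x => Real.rpow_nonneg (by positivity) _
    have hgc : Continuous g := by
      apply Continuous.rpow_const
      · fun_prop
      · intro x; left; positivity
    rw [MeasureTheory.integral_eq_lintegral_of_nonneg_ae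
      (Filter.Eventually.of_forall fun x => hg0 x) hgc.aestronglyMeasurable]
    apply ENNReal.toReal_le_of_le_ofReal (by positivity)
    set B0 := Metric.ball y ε with hB0_def
    set A : ℕ → Set (EuclideanSpace ℝ (Fin N)) :=
      fun k => Metric.ball y (2^(k+1) * ε) \ Metric.ball y (2^k * ε) with hA_def
    set T := Ω \ Metric.ball y (2^(K+1) * ε) with hT_def
    have hcover : Ω ⊆ B0 ∪ ((⋃ k ∈ Finset.range (K+1), A k) ∪ T) := by
      intro x hx
      by_cases h1 : dist x y < ε
      · exact Or.inl (Metric.mem_ball.mpr h1)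
      · push_neg at h1
        have hd : 0 < dist x y := lt_of_lt_of_le hε h1
        by_cases h2 : dist x y < 2^(K+1) * ε
        · refine Or.inr (Or.inl ?_)
          set t := Real.logb 2 (dist x y / ε) with htdef
          have hdr1 : 1 ≤ dist x y / ε := (one_le_div hε).mpr h1
          have ht0 : 0 ≤ t := Real.logb_nonneg one_lt_two hdr1
          set k := ⌊t⌋₊ with hk_def
          have h2t : (2:ℝ) ^ t = dist x y / ε :=
            Real.rpow_logb two_pos (by norm_num) (by positivity)
          have hklow : (2:ℝ)^k * ε ≤ dist x y := by
            rw [← le_div_iff₀ hε, ← h2t, ← Real.rpow_natCast 2 k]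
            exact Real.rpow_le_rpow_of_exponent_le one_le_two (Nat.floor_le ht0)
          have hkhigh : dist x y < 2^(k+1) * ε := by
            rw [← div_lt_iff₀ hε, ← h2t, ← Real.rpow_natCast 2 (k+1)]
            apply Real.rpow_lt_rpow_of_exponent_lt one_lt_two
            push_cast
            exact Nat.lt_floor_add_one t
          have hkK : k < K + 1 := by
            have hlt : dist x y / ε < 2 ^ ((K:ℝ)+1) := by
              rw [div_lt_iff₀ hε]
              calc dist x y < 2^(K+1) * ε := h2
                _ = 2 ^ ((K:ℝ)+1) * ε := by
                    rw [← Real.rpow_natCast 2 (K+1)]; push_cast; ring_nf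
            have htK : t < (K:ℝ) + 1 := by
              calc t < Real.logb 2 (2 ^ ((K:ℝ)+1)) :=
                    Real.logb_lt_logb one_lt_two (by positivity) hlt
                _ = (K:ℝ)+1 := Real.logb_rpow two_pos (by norm_num)
            rw [hk_def, Nat.floor_lt ht0]
            push_cast
            exact htK
          refine Set.mem_biUnion (Finset.mem_range.mpr hkK) ?_
          exact ⟨Metric.mem_ball.mpr hkhigh, fun hmem => absurd (Metric.mem_ball.mp hmem) (not_lt.mpr hklow)⟩
        · push_neg at h2
          exact Or.inr (Or.inr ⟨hx, fun hmem => absurd (Metric.mem_ball.mp hmem) (not_lt.mpr h2)⟩)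
    haveI : Nontrivial (EuclideanSpace ℝ (Fin N)) :=
      Module.nontrivial_of_finrank_pos (R := ℝ) (by rw [finrank_euclideanSpace_fin]; omega)
    have hle1 : ∫⁻ x in B0, ENNReal.ofReal (g x) ≤ V1 := by
      have hb : ∀ x, ENNReal.ofReal (g x) ≤ ENNReal.ofReal ((a*ε^2) ^ (-((N:ℝ)/2))) := by
        intro x
        apply ENNReal.ofReal_le_ofReal
        exact Real.rpow_le_rpow_of_nonpos (by positivity)
          (by nlinarith [sq_nonneg ‖x - y‖]) (neg_nonpos.mpr (by positivity))
      have hre : (a*ε^2) ^ (-((N:ℝ)/2)) * ε^N = a ^ (-((N:ℝ)/2)) := by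
        rw [Real.rpow_def_of_pos (by positivity), Real.rpow_def_of_pos ha,
          ← Real.rpow_natCast ε N, Real.rpow_def_of_pos hε, ← Real.exp_add,
          Real.log_mul ha.ne' (pow_ne_zero 2 hε.ne'), Real.log_pow]
        congr 1; push_cast; ring
      calc ∫⁻ x in B0, ENNReal.ofReal (g x)
          ≤ ∫⁻ _x in B0, ENNReal.ofReal ((a*ε^2) ^ (-((N:ℝ)/2))) := lintegral_mono hb
        _ = ENNReal.ofReal ((a*ε^2) ^ (-((N:ℝ)/2))) * volume B0 := setLIntegral_const _ _
        _ ≤ 1 * V1 := by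
            rw [hB0_def, Measure.addHaar_ball (μ := volume) y hε.le, finrank_euclideanSpace_fin,
              ← mul_assoc, ← ENNReal.ofReal_mul (Real.rpow_nonneg (by positivity) _), hre]
            have h1 : a ^ (-((N:ℝ)/2)) ≤ 1 :=
              Real.rpow_le_one_of_one_le_of_nonpos ha1 (neg_nonpos.mpr (by positivity))
            exact mul_le_mul_left (ENNReal.ofReal_le_one.mpr h1) _
        _ = V1 := one_mul _
    have hle2 : ∀ k : ℕ, ∫⁻ x in A k, ENNReal.ofReal (g x) ≤ ENNReal.ofReal ((2:ℝ)^N) * V1 := by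
      intro k
      have hpos : (0:ℝ) < 2^k * ε := by positivity
      have hb : ∀ x ∈ A k,
          ENNReal.ofReal (g x) ≤ ENNReal.ofReal ((((2:ℝ)^k * ε)^2) ^ (-((N:ℝ)/2))) := by
        intro x hx
        have hdx : 2^k * ε ≤ dist x y := not_lt.mp (fun h => hx.2 (Metric.mem_ball.mpr h))
        apply ENNReal.ofReal_le_ofReal
        apply Real.rpow_le_rpow_of_nonpos (by positivity) ?_ (neg_nonpos.mpr (by positivity))
        have hsq : ((2:ℝ)^k * ε)^2 ≤ dist x y ^ 2 := pow_le_pow_left₀ hpos.le hdx 2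
        have hdist : dist x y = ‖x - y‖ := dist_eq_norm x y
        nlinarith [mul_nonneg ha.le (sq_nonneg ε)]
      have hre : (((2:ℝ)^k * ε)^2) ^ (-((N:ℝ)/2)) * ((2:ℝ)^(k+1)*ε)^N = 2^N := by
        rw [Real.rpow_def_of_pos (by positivity), ← Real.rpow_natCast ((2:ℝ)^(k+1)*ε) N,
          Real.rpow_def_of_pos (by positivity), ← Real.exp_add,
          ← Real.rpow_natCast (2:ℝ) N, Real.rpow_def_of_pos two_pos]
        rw [Real.log_pow, Real.log_mul (pow_ne_zero _ two_ne_zero) hε.ne',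
          Real.log_mul (pow_ne_zero _ two_ne_zero) hε.ne', Real.log_pow, Real.log_pow]
        congr 1; push_cast; ring
      calc ∫⁻ x in A k, ENNReal.ofReal (g x)
          ≤ ∫⁻ _x in A k, ENNReal.ofReal ((((2:ℝ)^k * ε)^2) ^ (-((N:ℝ)/2))) :=
            setLIntegral_mono measurable_const hb
        _ = ENNReal.ofReal ((((2:ℝ)^k * ε)^2) ^ (-((N:ℝ)/2))) * volume (A k) :=
            setLIntegral_const _ _
        _ ≤ ENNReal.ofReal ((((2:ℝ)^k * ε)^2) ^ (-((N:ℝ)/2))) *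
              volume (Metric.ball y (2^(k+1) * ε)) :=
            mul_le_mul_right (measure_mono Set.diff_subset) _
        _ = ENNReal.ofReal ((2:ℝ)^N) * V1 := by
            rw [Measure.addHaar_ball (μ := volume) y (by positivity : (0:ℝ) ≤ 2^(k+1) * ε),
              finrank_euclideanSpace_fin, ← mul_assoc,
              ← ENNReal.ofReal_mul (Real.rpow_nonneg (by positivity) _), hre]
    have hle3 : ∫⁻ x in T, ENNReal.ofReal (g x) ≤ volume Ω := by
      have hb : ∀ x ∈ T, ENNReal.ofReal (g x) ≤ 1 := by
        intro x hx
        have hdx : 2^(K+1) * ε ≤ dist x y := not_lt.mp (fun h => hx.2 (Metric.mem_ball.mpr h))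
        have h1ε : 1 ≤ (2:ℝ)^K * ε := by
          have h := mul_le_mul_of_nonneg_right hK2 hε.le
          rwa [inv_mul_cancel₀ hε.ne'] at h
        have hd1 : 1 ≤ dist x y := by
          have hh : (2:ℝ)^(K+1) * ε = 2 * (2^K * ε) := by ring
          nlinarith
        have hbase1 : 1 ≤ a*ε^2 + ‖x - y‖^2 := by
          have hdist : dist x y = ‖x - y‖ := dist_eq_norm x y
          nlinarith [sq_nonneg ε]
        calc ENNReal.ofReal (g x) ≤ ENNReal.ofReal 1 :=
              ENNReal.ofReal_le_ofReal
                (Real.rpow_le_one_of_one_le_of_nonpos hbase1 (neg_nonpos.mpr (by positivity)))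
          _ = 1 := ENNReal.ofReal_one
      calc ∫⁻ x in T, ENNReal.ofReal (g x) ≤ ∫⁻ _x in T, 1 := setLIntegral_mono measurable_const hb
        _ = volume T := by rw [setLIntegral_const, one_mul]
        _ ≤ volume Ω := measure_mono Set.diff_subset
    calc ∫⁻ x in Ω, ENNReal.ofReal (g x)
        ≤ ∫⁻ x in B0 ∪ ((⋃ k ∈ Finset.range (K+1), A k) ∪ T), ENNReal.ofReal (g x) :=
          lintegral_mono_set hcover
      _ ≤ (∫⁻ x in B0, ENNReal.ofReal (g x)) +
            ((∫⁻ x in ⋃ k ∈ Finset.range (K+1), A k, ENNReal.ofReal (g x)) +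
              ∫⁻ x in T, ENNReal.ofReal (g x)) :=
          (lintegral_union_le _ _ _).trans (add_le_add le_rfl (lintegral_union_le _ _ _))
      _ ≤ V1 + ((∑ k ∈ Finset.range (K+1), ENNReal.ofReal ((2:ℝ)^N) * V1) + volume Ω) := by
          refine add_le_add hle1 (add_le_add ?_ hle3)
          exact (lintegral_biUnion_range_le _ _ _ _).trans
            (Finset.sum_le_sum fun k _ => hle2 k)
      _ = ENNReal.ofReal v + (ENNReal.ofReal (((K:ℝ)+1) * ((2:ℝ)^N * v)) + ENNReal.ofReal w) := by
          rw [Finset.sum_const, Finset.card_range, nsmul_eq_mul]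
          rw [hv_def, hw_def, ENNReal.ofReal_toReal hVlt, ENNReal.ofReal_toReal hΩlt]
          congr 1
          rw [ENNReal.ofReal_mul (by positivity), ENNReal.ofReal_mul (by norm_num),
            ENNReal.ofReal_toReal hVlt]
          congr 1
          · rw [← ENNReal.ofReal_natCast (K+1)]; congr 1; push_cast; ring
      _ ≤ ENNReal.ofReal (c * L) := by
          rw [← ENNReal.ofReal_add (by positivity) hw0, ← ENNReal.ofReal_add hv0 (by positivity)]
          apply ENNReal.ofReal_le_ofReal
          have hd1 : 1 ≤ L / Real.log 2 := (one_le_div hlog2).mpr hL2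
          have h1 : v + w ≤ (v + w) / Real.log 2 * L := by
            calc v + w = (v+w) * 1 := (mul_one _).symm
              _ ≤ (v+w) * (L / Real.log 2) := mul_le_mul_of_nonneg_left hd1 (by positivity)
              _ = (v+w)/Real.log 2 * L := by ring
          have h2 : ((K:ℝ)+1) * ((2:ℝ)^N * v) ≤ 5 * 2^N * v * L := by
            calc ((K:ℝ)+1) * ((2:ℝ)^N * v) ≤ (5*L) * ((2:ℝ)^N * v) :=
                  mul_le_mul_of_nonneg_right hK5 (by positivity)
              _ = 5 * 2^N * v * L := by ring
          have h3 : c * L = (v+w)/Real.log 2 * L + 5*2^N*v*L + L := by rw [hc_def]; ring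
          rw [h3]
          linarith
  -- assemble
  calc ∫ x in Ω, talentiRescaled N ε y x ^ ((N:ℝ)/((N:ℝ)-2))
      = ∫ x in Ω, a ^ ((N:ℝ)/2) * ε ^ ((N:ℝ)/2) * ((a*ε^2 + ‖x - y‖^2) ^ (-((N:ℝ)/2))) := by
        apply setIntegral_congr_fun hΩm  -- maybe wrong name
        intro x _
        exact talenti_pow_eq N hN hε y x
    _ = a ^ ((N:ℝ)/2) * ε ^ ((N:ℝ)/2) * ∫ x in Ω, (a*ε^2 + ‖x - y‖^2) ^ (-((N:ℝ)/2)) := by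
        simp only [mul_assoc, MeasureTheory.integral_const_mul]
    _ ≤ a ^ ((N:ℝ)/2) * ε ^ ((N:ℝ)/2) * (c * L) := by
        apply mul_le_mul_of_nonneg_left hKEY (by positivity)
    _ = a ^ ((N:ℝ)/2) * c * ε ^ ((N:ℝ)/2) * L := by ring
end

section
/- Let N ≥ 5 be an integer, set 2* = 2N/(N−2), and let Ω ⊂ ℝ^N be a bounded measurable set. Then there exists a constant C > 0 such that for every ε ∈ (0,1], every y ∈ ℝ^N and every measurable w : Ω → ℝ with ∫_Ω |w|^{2*} < ∞, one has |∫_Ω U_{ε,y}(x)^{N/(N−2)} · w(x) dx| ≤ C · ε · (∫_Ω |w|^{2*})^{1/2*}. -/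
open Real MeasureTheory

lemma memℒp_of_integrable_abs_rpow {α : Type*} [MeasurableSpace α] {μ : Measure α} {f : α → ℝ}
    (hm : AEStronglyMeasurable f μ) {p : ℝ} (hp : 0 < p)
    (h : Integrable (fun x => |f x| ^ p) μ) : MemLp f (ENNReal.ofReal p) μ := by
  have hp0 : ENNReal.ofReal p ≠ 0 := by
    simpa [ENNReal.ofReal_eq_zero, not_le] using hp
  refine (memLp_norm_rpow_iff hm hp0 ENNReal.ofReal_ne_top).mp ?_
  rw [ENNReal.div_self hp0 ENNReal.ofReal_ne_top, ENNReal.toReal_ofReal hp.le,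
    memLp_one_iff_integrable]
  have : (fun x => ‖f x‖ ^ p) = fun x => |f x| ^ p := by
    ext x; rw [Real.norm_eq_abs]
  rwa [this]

lemma talenti_nonneg (N : ℕ) (hN : 5 ≤ N) (x : EuclideanSpace ℝ (Fin N)) : 0 ≤ talenti N x := by
  have hN5 : (5:ℝ) ≤ (N:ℝ) := by exact_mod_cast hN
  apply Real.rpow_nonneg
  have h1 : (0:ℝ) ≤ (N:ℝ) * ((N:ℝ) - 2) := by nlinarith
  have h2 : (0:ℝ) ≤ (N:ℝ) * ((N:ℝ) - 2) + ‖x‖ ^ 2 := by positivity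
  exact div_nonneg h1 h2

lemma talenti_continuous (N : ℕ) (hN : 5 ≤ N) : Continuous (talenti N) := by
  have hN5 : (5:ℝ) ≤ (N:ℝ) := by exact_mod_cast hN
  apply Continuous.rpow_const
  · apply Continuous.div continuous_const
    · continuity
    · intro x
      have : (0:ℝ) < (N:ℝ) * ((N:ℝ) - 2) := by nlinarith
      positivity
  · intro x
    right
    linarith

lemma talenti_rpow_integrable (N : ℕ) (hN : 5 ≤ N) {β : ℝ} (hβl : (N:ℝ) < 2 * β) :
    Integrable (fun x : EuclideanSpace ℝ (Fin N) =>
      ((N : ℝ) * ((N : ℝ) - 2) / ((N : ℝ) * ((N : ℝ) - 2) + ‖x‖ ^ 2)) ^ β) volume := by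
  have hN5 : (5:ℝ) ≤ (N:ℝ) := by exact_mod_cast hN
  set a : ℝ := (N:ℝ) * ((N:ℝ) - 2) with ha_def
  have ha : (1:ℝ) ≤ a := by nlinarith
  have hβ0 : 0 ≤ β := by linarith [Nat.cast_nonneg (α := ℝ) N]
  have hbound : ∀ x : EuclideanSpace ℝ (Fin N),
      (a / (a + ‖x‖ ^ 2)) ^ β ≤ (2*a) ^ β * (1 + ‖x‖) ^ (-(2*β)) := by
    intro x
    have hx : (0:ℝ) ≤ ‖x‖ := norm_nonneg x
    have hden : (0:ℝ) < a + ‖x‖ ^ 2 := by positivity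
    have h1x : (0:ℝ) < 1 + ‖x‖ := by positivity
    have key : a / (a + ‖x‖ ^ 2) ≤ 2 * a * (1 + ‖x‖) ^ (-(2:ℝ)) := by
      have h2 : (1 + ‖x‖) ^ (-(2:ℝ)) = ((1 + ‖x‖)^2)⁻¹ := by
        rw [Real.rpow_neg h1x.le, Real.rpow_two]
      rw [h2, div_le_iff₀ hden, mul_assoc, inv_mul_eq_div, ← mul_div_assoc,
        le_div_iff₀ (by positivity)]
      nlinarith [sq_nonneg (‖x‖ - 1)]
    calc (a / (a + ‖x‖ ^ 2)) ^ β ≤ (2 * a * (1 + ‖x‖) ^ (-(2:ℝ))) ^ β :=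
          Real.rpow_le_rpow (by positivity) key hβ0
      _ = (2*a) ^ β * (1 + ‖x‖) ^ (-(2*β)) := by
          rw [Real.mul_rpow (by positivity) (by positivity), ← Real.rpow_mul h1x.le]
          ring_nf
  have hint : Integrable (fun x : EuclideanSpace ℝ (Fin N) =>
      (2*a) ^ β * (1 + ‖x‖) ^ (-(2*β))) volume := by
    apply Integrable.const_mul
    apply integrable_one_add_norm (E := EuclideanSpace ℝ (Fin N))
    rw [finrank_euclideanSpace_fin]
    exact hβl
  apply hint.mono
  · apply Continuous.aestronglyMeasurable
    apply Continuous.rpow_const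
    · apply Continuous.div continuous_const
      · continuity
      · intro x
        have : (0:ℝ) < a := by linarith
        positivity
    · intro x; right; exact hβ0
  · filter_upwards with x
    have hnn : (0:ℝ) ≤ (a / (a + ‖x‖ ^ 2)) ^ β := by
      apply Real.rpow_nonneg
      have : (0:ℝ) < a := by linarith
      positivity
    rw [Real.norm_eq_abs, Real.norm_eq_abs, abs_of_nonneg hnn, abs_of_nonneg (by positivity)]
    exact hbound x

set_option maxHeartbeats 1000000 in
/-- Estimate (4.12) of the paper: `|∫_Ω U_{ε,y}^(N/(N−2))·w| ≤ C·ε·|w|_{2*}`. -/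
theorem stmt_16 (N : ℕ) (hN : 5 ≤ N) (Ω : Set (EuclideanSpace ℝ (Fin N)))
    (hΩb : Bornology.IsBounded Ω) (hΩm : MeasurableSet Ω) :
    ∃ C > (0 : ℝ), ∀ ε ∈ Set.Ioc (0 : ℝ) 1, ∀ y : EuclideanSpace ℝ (Fin N),
      ∀ w : EuclideanSpace ℝ (Fin N) → ℝ, Measurable w →
        Integrable (fun x => |w x| ^ (2 * (N : ℝ) / ((N : ℝ) - 2))) (volume.restrict Ω) →
        |∫ x in Ω, talentiRescaled N ε y x ^ ((N : ℝ) / ((N : ℝ) - 2)) * w x|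
          ≤ C * ε * (∫ x in Ω, |w x| ^ (2 * (N : ℝ) / ((N : ℝ) - 2)))
              ^ (((N : ℝ) - 2) / (2 * (N : ℝ))) := by
  have hN5 : (5:ℝ) ≤ (N:ℝ) := by exact_mod_cast hN
  have hn : (0:ℝ) < (N:ℝ) := by linarith
  have hn2 : (0:ℝ) < (N:ℝ) - 2 := by linarith
  have hnp2 : (0:ℝ) < (N:ℝ) + 2 := by linarith
  set p : ℝ := 2 * (N:ℝ) / ((N:ℝ) + 2) with hp_def
  set q : ℝ := 2 * (N:ℝ) / ((N:ℝ) - 2) with hq_def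
  set r : ℝ := (N:ℝ) / ((N:ℝ) - 2) with hr_def
  set s : ℝ := r * p with hs_def
  set β : ℝ := ((N:ℝ) - 2) / 2 * s with hβ_def
  have hp_pos : 0 < p := by rw [hp_def]; positivity
  have hq_pos : 0 < q := by rw [hq_def]; positivity
  have hr_pos : 0 < r := by rw [hr_def]; positivity
  have hs_pos : 0 < s := by rw [hs_def]; positivity
  have hβ_pos : 0 < β := by rw [hβ_def]; positivity
  have hβl : (N:ℝ) < 2 * β := by
    have h2β : 2 * β = 2 * (N:ℝ) * (N:ℝ) / ((N:ℝ) + 2) := by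
      rw [hβ_def, hs_def, hr_def, hp_def]
      field_simp
    rw [h2β, lt_div_iff₀ hnp2]
    nlinarith
  -- global integrability of talenti ^ s
  have hGeq : (fun x : EuclideanSpace ℝ (Fin N) => talenti N x ^ s)
      = fun x => ((N : ℝ) * ((N : ℝ) - 2) / ((N : ℝ) * ((N : ℝ) - 2) + ‖x‖ ^ 2)) ^ β := by
    funext x
    have hb : (0:ℝ) ≤ (N:ℝ) * ((N:ℝ) - 2) / ((N:ℝ) * ((N:ℝ) - 2) + ‖x‖ ^ 2) :=
      div_nonneg (mul_nonneg hn.le hn2.le) (by positivity)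
    rw [talenti, ← Real.rpow_mul hb, hβ_def]
  have hGint : Integrable (fun x : EuclideanSpace ℝ (Fin N) => talenti N x ^ s) volume := by
    rw [hGeq]; exact talenti_rpow_integrable N hN hβl
  set I : ℝ := ∫ x : EuclideanSpace ℝ (Fin N), talenti N x ^ s with hI_def
  have hI0 : 0 ≤ I := integral_nonneg fun x => Real.rpow_nonneg (talenti_nonneg N hN x) s
  refine ⟨I ^ (1/p) + 1, by positivity, ?_⟩
  rintro ε ⟨hε0, hε1⟩ y w hw hwint
  set T : EuclideanSpace ℝ (Fin N) → ℝ := talentiRescaled N ε y with hT_def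
  have hT_nonneg : ∀ x, 0 ≤ T x := fun x =>
    mul_nonneg (Real.rpow_nonneg hε0.le _) (talenti_nonneg N hN _)
  set h : EuclideanSpace ℝ (Fin N) → ℝ := fun x => T x ^ r with hh_def
  have hh_nonneg : ∀ x, 0 ≤ h x := fun x => Real.rpow_nonneg (hT_nonneg x) r
  -- pointwise identity for h ^ p
  have hhp : ∀ x, h x ^ p = ε ^ (-β) * talenti N (ε⁻¹ • (x - y)) ^ s := by
    intro x
    rw [hh_def, ← Real.rpow_mul (hT_nonneg x), ← hs_def, hT_def, talentiRescaled,
      Real.mul_rpow (Real.rpow_nonneg hε0.le _) (talenti_nonneg N hN _),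
      ← Real.rpow_mul hε0.le, neg_mul, ← hβ_def]
  -- integrability of x ↦ h x ^ p on all of ℝ^N
  have hHint : Integrable (fun x => ε ^ (-β) * talenti N (ε⁻¹ • (x - y)) ^ s) volume := by
    apply Integrable.const_mul
    have h1 : Integrable (fun x : EuclideanSpace ℝ (Fin N) => talenti N (ε⁻¹ • x) ^ s) volume :=
      (integrable_comp_smul_iff volume (fun z : EuclideanSpace ℝ (Fin N) => talenti N z ^ s)
        (inv_ne_zero hε0.ne')).2 hGint
    exact h1.comp_sub_right y
  have hhp_int : Integrable (fun x => h x ^ p) volume := by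
    apply hHint.congr
    filter_upwards with x
    rw [hhp x]
  -- value of the global integral
  have hglobal : ∫ x, h x ^ p = ε ^ ((N:ℝ) - β) * I := by
    have e1 : ∫ x, h x ^ p = ∫ x, ε ^ (-β) * talenti N (ε⁻¹ • (x - y)) ^ s := by
      apply integral_congr_ae
      filter_upwards with x
      exact hhp x
    have e2 : ∫ x, talenti N (ε⁻¹ • (x - y)) ^ s
        = ∫ x : EuclideanSpace ℝ (Fin N), talenti N (ε⁻¹ • x) ^ s :=
      integral_sub_right_eq_self (fun z : EuclideanSpace ℝ (Fin N) => talenti N (ε⁻¹ • z) ^ s) y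
    have e3 : ∫ x : EuclideanSpace ℝ (Fin N), talenti N (ε⁻¹ • x) ^ s
        = |((ε⁻¹) ^ (Module.finrank ℝ (EuclideanSpace ℝ (Fin N))))⁻¹|
            • ∫ x : EuclideanSpace ℝ (Fin N), talenti N x ^ s :=
      Measure.integral_comp_smul volume (fun z : EuclideanSpace ℝ (Fin N) => talenti N z ^ s) ε⁻¹
    have e4 : |((ε⁻¹) ^ (Module.finrank ℝ (EuclideanSpace ℝ (Fin N))))⁻¹| = ε ^ ((N:ℝ)) := by
      rw [finrank_euclideanSpace_fin, inv_pow, inv_inv, abs_of_pos (pow_pos hε0 N),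
        ← Real.rpow_natCast]
    rw [e1, integral_const_mul, e2, e3, e4, smul_eq_mul, ← hI_def, ← mul_assoc,
      ← Real.rpow_add hε0]
    ring_nf
  -- Hölder
  have hpq : Real.HolderConjugate p q := by
    rw [Real.holderConjugate_iff]
    constructor
    · rw [hp_def, lt_div_iff₀ hnp2]; linarith
    · rw [hp_def, hq_def]
      field_simp
      ring
  have hhcont : Continuous h := by
    rw [hh_def]
    apply Continuous.rpow_const
    · rw [hT_def]
      unfold talentiRescaled
      exact continuous_const.mul ((talenti_continuous N hN).comp
        ((continuous_const_smul ε⁻¹).comp (continuous_id.sub continuous_const)))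
    · intro x; right; exact hr_pos.le
  have memh : MemLp h (ENNReal.ofReal p) (volume.restrict Ω) := by
    apply memℒp_of_integrable_abs_rpow hhcont.aestronglyMeasurable.restrict hp_pos
    apply (hhp_int.restrict (s := Ω)).congr
    filter_upwards with x
    rw [abs_of_nonneg (hh_nonneg x)]
  have memw : MemLp (fun x => |w x|) (ENNReal.ofReal q) (volume.restrict Ω) := by
    apply memℒp_of_integrable_abs_rpow (hw.abs.aestronglyMeasurable) hq_pos
    simpa [abs_abs] using hwint
  have holder : ∫ x in Ω, h x * |w x|
      ≤ (∫ x in Ω, h x ^ p) ^ (1/p) * (∫ x in Ω, |w x| ^ q) ^ (1/q) :=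
    integral_mul_le_Lp_mul_Lq_of_nonneg hpq
      (Filter.Eventually.of_forall fun x => hh_nonneg x)
      (Filter.Eventually.of_forall fun x => abs_nonneg (w x)) memh memw
  -- assemble
  set W : ℝ := (∫ x in Ω, |w x| ^ q) ^ (1/q) with hW_def
  have hW0 : 0 ≤ W :=
    Real.rpow_nonneg (integral_nonneg fun x => Real.rpow_nonneg (abs_nonneg _) q) _
  have hexp_eq : ((N:ℝ) - 2) / (2 * (N:ℝ)) = 1/q := by
    rw [hq_def, one_div_div]
  rw [hexp_eq, ← hW_def]
  have h1 : |∫ x in Ω, h x * w x| ≤ ∫ x in Ω, h x * |w x| := by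
    rw [← Real.norm_eq_abs]
    refine (norm_integral_le_integral_norm _).trans_eq ?_
    apply integral_congr_ae
    filter_upwards with x
    rw [norm_mul, Real.norm_eq_abs, Real.norm_eq_abs, abs_of_nonneg (hh_nonneg x)]
  have h2 : (∫ x in Ω, h x ^ p) ^ (1/p) ≤ ε * I ^ (1/p) := by
    have hle : ∫ x in Ω, h x ^ p ≤ ε ^ ((N:ℝ) - β) * I :=
      (setIntegral_le_integral hhp_int
        (Filter.Eventually.of_forall fun x => Real.rpow_nonneg (hh_nonneg x) p)).trans_eq hglobal
    have h3 : (∫ x in Ω, h x ^ p) ^ (1/p) ≤ (ε ^ ((N:ℝ) - β) * I) ^ (1/p) :=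
      Real.rpow_le_rpow
        (integral_nonneg fun x => Real.rpow_nonneg (hh_nonneg x) p) hle (by positivity)
    refine h3.trans_eq ?_
    rw [Real.mul_rpow (Real.rpow_nonneg hε0.le _) hI0, ← Real.rpow_mul hε0.le]
    have hexp1 : ((N:ℝ) - β) * (1/p) = 1 := by
      rw [hβ_def, hs_def, hr_def, hp_def]
      field_simp
      ring
    rw [hexp1, Real.rpow_one]
  calc |∫ x in Ω, h x * w x| ≤ ∫ x in Ω, h x * |w x| := h1
    _ ≤ (∫ x in Ω, h x ^ p) ^ (1/p) * W := holder
    _ ≤ (ε * I ^ (1/p)) * W := mul_le_mul_of_nonneg_right h2 hW0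
    _ ≤ (I ^ (1/p) + 1) * ε * W := by
        have hI1 : 0 ≤ I ^ (1/p) := Real.rpow_nonneg hI0 _
        nlinarith
end

section
/- Let N ≥ 5 be an integer, let σ > 0, and let λ₁, …, λ_{N−1} ≥ 0 be real numbers. Define Σ := { (x′, x_N) ∈ ℝ^{N−1} × ℝ : |x_i| < σ for all 1 ≤ i ≤ N−1, and 0 < x_N < Σ_{i=1}^{N−1} λ_i x_i² }. Then there exists a constant C > 0 such that for every ε ∈ (0,1], ∫_Σ U_{ε,0}(x)^{2(N−1)/(N−2)} dx ≤ C · ε². -/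
open Real MeasureTheory
open scoped ENNReal

/-- The rescaled instanton centered at the origin, `U_{ε,0}(x) = ε^(−(N−2)/2)·U(x/ε)`. -/
noncomputable def talentiRescaled₀ (N : ℕ) (ε : ℝ) (x : EuclideanSpace ℝ (Fin N)) : ℝ :=
  ε ^ (-(((N : ℝ) - 2) / 2)) * talenti N (ε⁻¹ • x)

lemma coord_le {n : ℕ} (x : EuclideanSpace ℝ (Fin n)) (i : Fin n) : |x i| ≤ ‖x‖ := by
  rw [EuclideanSpace.norm_eq]
  calc |x i| = Real.sqrt (‖x i‖ ^ 2) := by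
        rw [Real.sqrt_sq_eq_abs, Real.norm_eq_abs, abs_abs]
    _ ≤ _ := Real.sqrt_le_sqrt (Finset.single_le_sum
        (f := fun j => ‖x j‖ ^ 2) (fun j _ => by positivity) (Finset.mem_univ i))

lemma exists_dyadic {t : ℝ} (ht : 1 ≤ t) : ∃ k : ℕ, (2:ℝ) ^ k ≤ t ∧ t ≤ (2:ℝ) ^ (k + 1) := by
  have hn : 1 ≤ ⌊t⌋₊ := Nat.le_floor (by exact_mod_cast ht)
  refine ⟨Nat.log 2 ⌊t⌋₊, ?_, ?_⟩
  · calc ((2:ℝ) ^ Nat.log 2 ⌊t⌋₊) = ((2 ^ Nat.log 2 ⌊t⌋₊ : ℕ) : ℝ) := by push_cast; ring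
      _ ≤ (⌊t⌋₊ : ℝ) := by exact_mod_cast Nat.pow_log_le_self 2 (by omega)
      _ ≤ t := Nat.floor_le (by linarith)
  · have h2 := Nat.lt_pow_succ_log_self (by norm_num : 1 < 2) ⌊t⌋₊
    have h3 : t < (⌊t⌋₊ + 1 : ℝ) := Nat.lt_floor_add_one t
    have h4 : ((⌊t⌋₊ + 1 : ℕ) : ℝ) ≤ ((2 ^ (Nat.log 2 ⌊t⌋₊ + 1) : ℕ) : ℝ) := by
      exact_mod_cast Nat.succ_le_of_lt h2
    push_cast at h4
    linarith

lemma volume_box {n : ℕ} (l : Fin n) (c d R : ℝ) :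
    volume {x : EuclideanSpace ℝ (Fin n) |
        ∀ i, x i ∈ Set.Icc (if i = l then c else -R) (if i = l then d else R)}
      = ENNReal.ofReal (d - c) * ENNReal.ofReal (2 * R) ^ (n - 1) := by
  have hmeas : ∀ i : Fin n,
      MeasurableSet (Set.Icc (if i = l then c else -R) (if i = l then d else R)) :=
    fun i => measurableSet_Icc
  have h1 : {x : EuclideanSpace ℝ (Fin n) |
        ∀ i, x i ∈ Set.Icc (if i = l then c else -R) (if i = l then d else R)}
      = (MeasurableEquiv.toLp 2 (Fin n → ℝ)).symm ⁻¹'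
        (Set.univ.pi fun i => Set.Icc (if i = l then c else -R) (if i = l then d else R)) := by
    ext x
    simp only [Set.mem_setOf_eq, Set.mem_preimage, Set.mem_pi, Set.mem_univ, forall_true_left]
    rfl
  rw [h1, (EuclideanSpace.volume_preserving_symm_measurableEquiv_toLp _).measure_preimage
      ((MeasurableSet.univ_pi hmeas).nullMeasurableSet), volume_pi_pi]
  rw [← Finset.mul_prod_erase Finset.univ _ (Finset.mem_univ l)]
  have h2 : ∀ i ∈ Finset.univ.erase l,
      volume (Set.Icc (if i = l then c else -R) (if i = l then d else R))
        = ENNReal.ofReal (2 * R) := by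
    intro i hi
    rw [if_neg (Finset.ne_of_mem_erase hi), if_neg (Finset.ne_of_mem_erase hi), Real.volume_Icc]
    congr 1; ring
  rw [Finset.prod_congr rfl h2, Finset.prod_const, Finset.card_erase_of_mem (Finset.mem_univ l),
    Finset.card_univ, Fintype.card_fin, if_pos rfl, if_pos rfl, Real.volume_Icc]

lemma crunch0 (m : ℕ) {ε : ℝ} (hε : 0 < ε) (Λ : ℝ) :
    ε ^ (-(m : ℝ)) * (Λ * ε ^ 2 * (2 * ε) ^ m) = 2 ^ m * Λ * ε ^ 2 := by
  rw [Real.rpow_neg hε.le, Real.rpow_natCast]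
  field_simp
  ring

lemma crunchk (p k : ℕ) {ε : ℝ} (hε : 0 < ε) (Λ a : ℝ) :
    ε ^ (-((p + 4 : ℕ) : ℝ)) * (a * ((2:ℝ) ^ 2)⁻¹ ^ k) ^ (p + 4) *
      (Λ * ((2:ℝ) ^ (k + 1) * ε) ^ 2 * ((2:ℝ) * ((2:ℝ) ^ (k + 1) * ε)) ^ (p + 4)) =
    a ^ (p + 4) * Λ * (2:ℝ) ^ (2 * (p + 5)) * ε ^ 2 * ((2:ℝ)⁻¹ ^ (p + 2)) ^ k := by
  rw [Real.rpow_neg hε.le, Real.rpow_natCast]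
  have h1 : ((2:ℝ) ^ 2)⁻¹ ^ k = (((2:ℝ) ^ k) ^ 2)⁻¹ := by
    rw [inv_pow, ← pow_mul, ← pow_mul, Nat.mul_comm]
  have h2 : ((2:ℝ)⁻¹ ^ (p + 2)) ^ k = (((2:ℝ) ^ k) ^ (p + 2))⁻¹ := by
    rw [inv_pow, inv_pow, ← pow_mul, ← pow_mul, Nat.mul_comm]
  rw [h1, h2, pow_succ (2:ℝ) k]
  have ht : (0:ℝ) < 2 ^ k := by positivity
  generalize (2:ℝ) ^ k = t at ht ⊢
  rw [eq_mul_inv_iff_mul_eq₀ (by positivity)]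
  simp only [mul_pow, inv_pow]
  field_simp
  ring

lemma f_eq (N : ℕ) (hN : 5 ≤ N) {ε : ℝ} (hε : 0 < ε) (x : EuclideanSpace ℝ (Fin N)) :
    talentiRescaled₀ N ε x ^ (2 * ((N : ℝ) - 1) / ((N : ℝ) - 2)) =
    ε ^ (-((N : ℝ) - 1)) *
      ((N : ℝ) * ((N : ℝ) - 2) * ε ^ 2 / ((N : ℝ) * ((N : ℝ) - 2) * ε ^ 2 + ‖x‖ ^ 2))
        ^ ((N : ℝ) - 1) := by
  have hN' : (5:ℝ) ≤ (N : ℝ) := by exact_mod_cast hN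
  have ha : 0 < (N : ℝ) * ((N : ℝ) - 2) := by nlinarith
  have hε2 : 0 < (N : ℝ) * ((N : ℝ) - 2) * ε ^ 2 := mul_pos ha (pow_pos hε 2)
  have hden : 0 < (N : ℝ) * ((N : ℝ) - 2) + ‖ε⁻¹ • x‖ ^ 2 := by
    have := sq_nonneg ‖ε⁻¹ • x‖; nlinarith
  have hden2 : 0 < (N : ℝ) * ((N : ℝ) - 2) * ε ^ 2 + ‖x‖ ^ 2 := by
    have := sq_nonneg ‖x‖; nlinarith
  have hnorm : ‖ε⁻¹ • x‖ ^ 2 = ε⁻¹ ^ 2 * ‖x‖ ^ 2 := by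
    rw [norm_smul, norm_inv, Real.norm_eq_abs, abs_of_pos hε, mul_pow]
  have hden' : 0 < (N : ℝ) * ((N : ℝ) - 2) + ε⁻¹ ^ 2 * ‖x‖ ^ 2 := by rw [← hnorm]; exact hden
  have hkey : (N : ℝ) * ((N : ℝ) - 2) / ((N : ℝ) * ((N : ℝ) - 2) + ‖ε⁻¹ • x‖ ^ 2)
      = (N : ℝ) * ((N : ℝ) - 2) * ε ^ 2 / ((N : ℝ) * ((N : ℝ) - 2) * ε ^ 2 + ‖x‖ ^ 2) := by
    rw [hnorm, div_eq_div_iff hden'.ne' hden2.ne']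
    field_simp
  have ht0 : 0 ≤ (N : ℝ) * ((N : ℝ) - 2) * ε ^ 2 / ((N : ℝ) * ((N : ℝ) - 2) * ε ^ 2 + ‖x‖ ^ 2) :=
    div_nonneg hε2.le hden2.le
  rw [talentiRescaled₀, talenti, hkey]
  rw [Real.mul_rpow (Real.rpow_nonneg hε.le _) (Real.rpow_nonneg ht0 _),
    ← Real.rpow_mul hε.le, ← Real.rpow_mul ht0]
  have h2 : (N : ℝ) - 2 ≠ 0 := by nlinarith
  congr 1
  · congr 1
    field_simp
  · congr 1
    field_simp

set_option maxHeartbeats 1000000 in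
/-- Appendix B of the paper: the boundary-cap contribution satisfies
`∫_Σ U_{ε,0}^(2(N−1)/(N−2)) ≤ C·ε²` where
`Σ = {(x′,x_N) : |x_i| < σ (i ≤ N−1), 0 < x_N < Σ λ_i x_i²}`. -/
theorem stmt_17 (N : ℕ) (hN : 5 ≤ N) (σ : ℝ) (hσ : 0 < σ)
    (lam : Fin (N - 1) → ℝ) (hlam : ∀ i, 0 ≤ lam i) :
    let Scap : Set (EuclideanSpace ℝ (Fin N)) :=
      {x | (∀ i : Fin (N - 1), |x (Fin.castLE (Nat.sub_le N 1) i)| < σ) ∧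
           0 < x ⟨N - 1, by omega⟩ ∧
           x ⟨N - 1, by omega⟩ < ∑ i : Fin (N - 1), lam i * x (Fin.castLE (Nat.sub_le N 1) i) ^ 2}
    ∃ C > (0 : ℝ), ∀ ε ∈ Set.Ioc (0 : ℝ) 1,
      ∫ x in Scap, talentiRescaled₀ N ε x ^ (2 * ((N : ℝ) - 1) / ((N : ℝ) - 2)) ≤ C * ε ^ 2 := by
  intro Scap
  obtain ⟨p, rfl⟩ : ∃ p, N = p + 5 := ⟨N - 5, by omega⟩
  have hN' : (5:ℝ) ≤ ((p + 5 : ℕ) : ℝ) := by exact_mod_cast hN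
  have ha : 0 < ((p + 5 : ℕ) : ℝ) * (((p + 5 : ℕ) : ℝ) - 2) := by nlinarith
  set a : ℝ := ((p + 5 : ℕ) : ℝ) * (((p + 5 : ℕ) : ℝ) - 2) with ha_def
  set Λ : ℝ := ∑ i, lam i with hΛ_def
  have hΛ : 0 ≤ Λ := Finset.sum_nonneg fun i _ => hlam i
  set m : ℕ := p + 4 with hm_def
  refine ⟨2 ^ m * Λ + 2 * (a ^ m * Λ * 2 ^ (2 * (p + 5))) + 1, by positivity, ?_⟩
  rintro ε ⟨hε, hε1⟩
  set l : Fin (p + 5) := ⟨p + 4, by omega⟩ with hl_def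
  set f : EuclideanSpace ℝ (Fin (p + 5)) → ℝ :=
    fun x => talentiRescaled₀ (p + 5) ε x ^
      (2 * (((p + 5 : ℕ) : ℝ) - 1) / (((p + 5 : ℕ) : ℝ) - 2)) with hf_def
  have hexpm : -(((p + 5 : ℕ) : ℝ) - 1) = -((m : ℕ) : ℝ) := by rw [hm_def]; push_cast; ring
  have hf_eq : ∀ x, f x = ε ^ (-((m : ℕ) : ℝ)) *
      (a * ε ^ 2 / (a * ε ^ 2 + ‖x‖ ^ 2)) ^ (((p + 5 : ℕ) : ℝ) - 1) := by
    intro x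
    simp only [hf_def]
    rw [f_eq (p + 5) hN hε x, hexpm, ← ha_def]
  have hfrac : ∀ x : EuclideanSpace ℝ (Fin (p + 5)),
      0 ≤ a * ε ^ 2 / (a * ε ^ 2 + ‖x‖ ^ 2) ∧ a * ε ^ 2 / (a * ε ^ 2 + ‖x‖ ^ 2) ≤ 1 := by
    intro x
    have h1 : 0 < a * ε ^ 2 := mul_pos ha (pow_pos hε 2)
    have h2 : 0 < a * ε ^ 2 + ‖x‖ ^ 2 := by nlinarith [sq_nonneg ‖x‖]
    exact ⟨div_nonneg h1.le h2.le, (div_le_one h2).2 (by nlinarith [sq_nonneg ‖x‖])⟩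
  have hf_nonneg : ∀ x, 0 ≤ f x := by
    intro x
    rw [hf_eq x]
    exact mul_nonneg (Real.rpow_nonneg hε.le _) (Real.rpow_nonneg (hfrac x).1 _)
  have hcont : Continuous f := by
    have hc0 : Continuous fun x : EuclideanSpace ℝ (Fin (p + 5)) =>
        ((p + 5 : ℕ) : ℝ) * (((p + 5 : ℕ) : ℝ) - 2) + ‖ε⁻¹ • x‖ ^ 2 := by
      fun_prop
    have hc1 : Continuous fun x : EuclideanSpace ℝ (Fin (p + 5)) =>
        ((p + 5 : ℕ) : ℝ) * (((p + 5 : ℕ) : ℝ) - 2) /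
          (((p + 5 : ℕ) : ℝ) * (((p + 5 : ℕ) : ℝ) - 2) + ‖ε⁻¹ • x‖ ^ 2) :=
      continuous_const.div hc0 (fun x => by nlinarith [sq_nonneg ‖ε⁻¹ • x‖])
    have hc2 : Continuous fun x : EuclideanSpace ℝ (Fin (p + 5)) =>
        talentiRescaled₀ (p + 5) ε x := by
      simp only [talentiRescaled₀, talenti]
      exact continuous_const.mul (hc1.rpow_const fun x => Or.inr (by nlinarith))
    rw [hf_def]
    exact hc2.rpow_const fun x => Or.inr (div_nonneg (by nlinarith) (by nlinarith))
  have hint : ∫ x in Scap, f x = (∫⁻ x in Scap, ENNReal.ofReal (f x)).toReal :=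
    integral_eq_lintegral_of_nonneg_ae (Filter.Eventually.of_forall hf_nonneg)
      hcont.aestronglyMeasurable
  rw [hint]
  apply ENNReal.toReal_le_of_le_ofReal (by positivity)
  set Box : ℝ → Set (EuclideanSpace ℝ (Fin (p + 5))) := fun R =>
    {x | ∀ i, x i ∈ Set.Icc (if i = l then 0 else -R) (if i = l then Λ * R ^ 2 else R)}
    with hBox_def
  have hBoxVol : ∀ R : ℝ, 0 ≤ R →
      volume (Box R) = ENNReal.ofReal (Λ * R ^ 2) * ENNReal.ofReal ((2 * R) ^ m) := by
    intro R hR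
    rw [hBox_def]
    simp only []
    rw [volume_box l 0 (Λ * R ^ 2) R, sub_zero, ENNReal.ofReal_pow (by positivity)]
    rfl
  have hsub : ∀ R : ℝ, Scap ∩ {x | ‖x‖ ≤ R} ⊆ Box R := by
    rintro R x ⟨hxS, hxn⟩
    obtain ⟨hx1, hx2, hx3⟩ := hxS
    simp only [Set.mem_setOf_eq] at hxn
    intro i
    by_cases hi : i = l
    · subst hi
      rw [if_pos rfl, if_pos rfl, Set.mem_Icc]
      refine ⟨hx2.le, hx3.le.trans ?_⟩
      rw [hΛ_def, Finset.sum_mul]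
      refine Finset.sum_le_sum fun j _ => ?_
      have habs : |x (Fin.castLE (Nat.sub_le (p + 5) 1) j)| ≤ R := (coord_le x _).trans hxn
      have h5 := abs_le.mp habs
      have hsq : x (Fin.castLE (Nat.sub_le (p + 5) 1) j) ^ 2 ≤ R ^ 2 := sq_le_sq' h5.1 h5.2
      exact mul_le_mul_of_nonneg_left hsq (hlam j)
    · rw [if_neg hi, if_neg hi, Set.mem_Icc]
      exact abs_le.mp ((coord_le x i).trans hxn)
  have hb0 : ∀ x, f x ≤ ε ^ (-((m : ℕ) : ℝ)) := by
    intro x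
    rw [hf_eq x]
    calc ε ^ (-((m : ℕ) : ℝ)) * (a * ε ^ 2 / (a * ε ^ 2 + ‖x‖ ^ 2)) ^ (((p + 5 : ℕ) : ℝ) - 1)
        ≤ ε ^ (-((m : ℕ) : ℝ)) * 1 := by
          refine mul_le_mul_of_nonneg_left ?_ (Real.rpow_nonneg hε.le _)
          exact Real.rpow_le_one (hfrac x).1 (hfrac x).2 (by nlinarith)
      _ = ε ^ (-((m : ℕ) : ℝ)) := mul_one _
  have hbk : ∀ (k : ℕ) (x : EuclideanSpace ℝ (Fin (p + 5))), (2:ℝ) ^ k * ε ≤ ‖x‖ →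
      f x ≤ ε ^ (-((m : ℕ) : ℝ)) * (a * ((2:ℝ) ^ 2)⁻¹ ^ k) ^ m := by
    intro k x hx
    rw [hf_eq x]
    refine mul_le_mul_of_nonneg_left ?_ (Real.rpow_nonneg hε.le _)
    have h2k : (0:ℝ) < 2 ^ k * ε := by positivity
    have haε : 0 < a * ε ^ 2 := mul_pos ha (pow_pos hε 2)
    have hden : 0 < a * ε ^ 2 + ‖x‖ ^ 2 := by nlinarith [sq_nonneg ‖x‖]
    have h1 : ((2:ℝ) ^ k * ε) ^ 2 ≤ a * ε ^ 2 + ‖x‖ ^ 2 := by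
      have h2 : ((2:ℝ) ^ k * ε) ^ 2 ≤ ‖x‖ ^ 2 := pow_le_pow_left₀ h2k.le hx 2
      linarith
    have hfle : a * ε ^ 2 / (a * ε ^ 2 + ‖x‖ ^ 2) ≤ a * ((2:ℝ) ^ 2)⁻¹ ^ k := by
      calc a * ε ^ 2 / (a * ε ^ 2 + ‖x‖ ^ 2) ≤ a * ε ^ 2 / (((2:ℝ) ^ k * ε) ^ 2) :=
            (div_le_div_iff_of_pos_left haε hden (by positivity)).2 h1
        _ = a * ((2:ℝ) ^ 2)⁻¹ ^ k := by
            have hpk : ((2:ℝ) ^ k * ε) ^ 2 = ε ^ 2 * ((2:ℝ) ^ 2) ^ k := by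
              rw [mul_pow, ← pow_mul, ← pow_mul, Nat.mul_comm]
              ring
            rw [hpk, ← div_div, mul_div_cancel_right₀ _ (by positivity : (ε:ℝ) ^ 2 ≠ 0),
              div_eq_mul_inv, inv_pow]
    calc (a * ε ^ 2 / (a * ε ^ 2 + ‖x‖ ^ 2)) ^ (((p + 5 : ℕ) : ℝ) - 1)
        ≤ (a * ((2:ℝ) ^ 2)⁻¹ ^ k) ^ (((p + 5 : ℕ) : ℝ) - 1) :=
          Real.rpow_le_rpow (hfrac x).1 hfle (by push_cast; linarith)
      _ = (a * ((2:ℝ) ^ 2)⁻¹ ^ k) ^ m := by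
          rw [show ((p + 5 : ℕ) : ℝ) - 1 = ((m : ℕ) : ℝ) from by rw [hm_def]; push_cast; ring,
            Real.rpow_natCast]
  have hcover : Scap ⊆ Box ε ∪ ⋃ k : ℕ,
      (Box ((2:ℝ) ^ (k + 1) * ε) ∩ {x | (2:ℝ) ^ k * ε ≤ ‖x‖}) := by
    intro x hx
    rcases le_or_gt ‖x‖ ε with h | h
    · exact Or.inl (hsub ε ⟨hx, h⟩)
    · right
      have h1 : 1 ≤ ‖x‖ / ε := by rw [le_div_iff₀ hε]; linarith
      obtain ⟨k, hk1, hk2⟩ := exists_dyadic h1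
      rw [le_div_iff₀ hε] at hk1
      rw [div_le_iff₀ hε] at hk2
      exact Set.mem_iUnion.2 ⟨k, hsub _ ⟨hx, show ‖x‖ ≤ (2:ℝ) ^ (k + 1) * ε by linarith⟩,
        show (2:ℝ) ^ k * ε ≤ ‖x‖ by linarith⟩
  have hterm0 : (∫⁻ x in Box ε, ENNReal.ofReal (f x)) ≤ ENNReal.ofReal (2 ^ m * Λ * ε ^ 2) := by
    calc (∫⁻ x in Box ε, ENNReal.ofReal (f x))
        ≤ ∫⁻ _ in Box ε, ENNReal.ofReal (ε ^ (-((m : ℕ) : ℝ))) :=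
          setLIntegral_mono measurable_const fun x _ => ENNReal.ofReal_le_ofReal (hb0 x)
      _ = ENNReal.ofReal (ε ^ (-((m : ℕ) : ℝ))) * volume (Box ε) := setLIntegral_const _ _
      _ = ENNReal.ofReal (ε ^ (-((m : ℕ) : ℝ)) * (Λ * ε ^ 2 * (2 * ε) ^ m)) := by
          rw [hBoxVol ε hε.le, ← ENNReal.ofReal_mul (by positivity),
            ← ENNReal.ofReal_mul (Real.rpow_nonneg hε.le _)]
      _ = ENNReal.ofReal (2 ^ m * Λ * ε ^ 2) := by rw [crunch0 m hε Λ]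
  have htermk : ∀ k : ℕ,
      (∫⁻ x in Box ((2:ℝ) ^ (k + 1) * ε) ∩ {x | (2:ℝ) ^ k * ε ≤ ‖x‖}, ENNReal.ofReal (f x))
        ≤ ENNReal.ofReal (a ^ m * Λ * 2 ^ (2 * (p + 5)) * ε ^ 2 * ((2:ℝ)⁻¹ ^ (p + 2)) ^ k) := by
    intro k
    have hR : (0:ℝ) < (2:ℝ) ^ (k + 1) * ε := by positivity
    calc (∫⁻ x in Box ((2:ℝ) ^ (k + 1) * ε) ∩ {x | (2:ℝ) ^ k * ε ≤ ‖x‖}, ENNReal.ofReal (f x))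
        ≤ ∫⁻ _ in Box ((2:ℝ) ^ (k + 1) * ε) ∩ {x | (2:ℝ) ^ k * ε ≤ ‖x‖},
            ENNReal.ofReal (ε ^ (-((m : ℕ) : ℝ)) * (a * ((2:ℝ) ^ 2)⁻¹ ^ k) ^ m) :=
          setLIntegral_mono measurable_const fun x hx =>
            ENNReal.ofReal_le_ofReal (hbk k x hx.2)
      _ = ENNReal.ofReal (ε ^ (-((m : ℕ) : ℝ)) * (a * ((2:ℝ) ^ 2)⁻¹ ^ k) ^ m) *
            volume (Box ((2:ℝ) ^ (k + 1) * ε) ∩ {x | (2:ℝ) ^ k * ε ≤ ‖x‖}) :=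
          setLIntegral_const _ _
      _ ≤ ENNReal.ofReal (ε ^ (-((m : ℕ) : ℝ)) * (a * ((2:ℝ) ^ 2)⁻¹ ^ k) ^ m) *
            volume (Box ((2:ℝ) ^ (k + 1) * ε)) :=
          mul_le_mul_right (measure_mono Set.inter_subset_left) _
      _ = ENNReal.ofReal (ε ^ (-((m : ℕ) : ℝ)) * (a * ((2:ℝ) ^ 2)⁻¹ ^ k) ^ m *
            (Λ * ((2:ℝ) ^ (k + 1) * ε) ^ 2 * (2 * ((2:ℝ) ^ (k + 1) * ε)) ^ m)) := by
          rw [hBoxVol _ hR.le, ← ENNReal.ofReal_mul (by positivity),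
            ← ENNReal.ofReal_mul (mul_nonneg (Real.rpow_nonneg hε.le _) (by positivity))]
      _ = ENNReal.ofReal (a ^ m * Λ * 2 ^ (2 * (p + 5)) * ε ^ 2 * ((2:ℝ)⁻¹ ^ (p + 2)) ^ k) := by
          rw [hm_def, show ((p + 4 : ℕ) : ℝ) = (((p + 4 : ℕ) : ℕ) : ℝ) from rfl,
            crunchk p k hε Λ a]
  calc (∫⁻ x in Scap, ENNReal.ofReal (f x))
      ≤ ∫⁻ x in Box ε ∪ ⋃ k : ℕ,
          (Box ((2:ℝ) ^ (k + 1) * ε) ∩ {x | (2:ℝ) ^ k * ε ≤ ‖x‖}), ENNReal.ofReal (f x) :=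
        lintegral_mono_set hcover
    _ ≤ (∫⁻ x in Box ε, ENNReal.ofReal (f x)) +
          ∫⁻ x in ⋃ k : ℕ, (Box ((2:ℝ) ^ (k + 1) * ε) ∩ {x | (2:ℝ) ^ k * ε ≤ ‖x‖}),
            ENNReal.ofReal (f x) := lintegral_union_le _ _ _
    _ ≤ (∫⁻ x in Box ε, ENNReal.ofReal (f x)) +
          ∑' k : ℕ, ∫⁻ x in Box ((2:ℝ) ^ (k + 1) * ε) ∩ {x | (2:ℝ) ^ k * ε ≤ ‖x‖},
            ENNReal.ofReal (f x) := add_le_add_right (lintegral_iUnion_le _ _) _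
    _ ≤ ENNReal.ofReal (2 ^ m * Λ * ε ^ 2) +
          ∑' k : ℕ, ENNReal.ofReal
            (a ^ m * Λ * 2 ^ (2 * (p + 5)) * ε ^ 2 * ((2:ℝ)⁻¹ ^ (p + 2)) ^ k) :=
        add_le_add hterm0 (ENNReal.tsum_le_tsum htermk)
    _ ≤ ENNReal.ofReal (2 ^ m * Λ * ε ^ 2) +
          ENNReal.ofReal (a ^ m * Λ * 2 ^ (2 * (p + 5)) * ε ^ 2) * 2 := by
        refine add_le_add_right ?_ _
        calc (∑' k : ℕ, ENNReal.ofReal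
                (a ^ m * Λ * 2 ^ (2 * (p + 5)) * ε ^ 2 * ((2:ℝ)⁻¹ ^ (p + 2)) ^ k))
            = ENNReal.ofReal (a ^ m * Λ * 2 ^ (2 * (p + 5)) * ε ^ 2) *
              ∑' k : ℕ, (ENNReal.ofReal ((2:ℝ)⁻¹ ^ (p + 2))) ^ k := by
              rw [← ENNReal.tsum_mul_left]
              congr 1
              ext k
              rw [← ENNReal.ofReal_pow (by positivity), ← ENNReal.ofReal_mul (by positivity)]
          _ ≤ ENNReal.ofReal (a ^ m * Λ * 2 ^ (2 * (p + 5)) * ε ^ 2) * 2 := by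
              refine mul_le_mul_right ?_ _
              rw [ENNReal.tsum_geometric]
              have hq : ENNReal.ofReal ((2:ℝ)⁻¹ ^ (p + 2)) ≤ 2⁻¹ := by
                rw [show ((2:ℝ≥0∞))⁻¹ = ENNReal.ofReal 2⁻¹ by
                  rw [ENNReal.ofReal_inv_of_pos (by norm_num)]
                  norm_num]
                apply ENNReal.ofReal_le_ofReal
                calc ((2:ℝ)⁻¹) ^ (p + 2) ≤ (2:ℝ)⁻¹ ^ 1 :=
                      pow_le_pow_of_le_one (by norm_num) (by norm_num) (by omega)
                  _ = 2⁻¹ := pow_one _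
              have h12 : (2:ℝ≥0∞)⁻¹ ≤ 1 - ENNReal.ofReal ((2:ℝ)⁻¹ ^ (p + 2)) := by
                apply ENNReal.le_sub_of_add_le_right ENNReal.ofReal_ne_top
                calc (2:ℝ≥0∞)⁻¹ + ENNReal.ofReal ((2:ℝ)⁻¹ ^ (p + 2)) ≤ 2⁻¹ + 2⁻¹ :=
                      add_le_add le_rfl hq
                  _ = 1 := ENNReal.inv_two_add_inv_two
              calc (1 - ENNReal.ofReal ((2:ℝ)⁻¹ ^ (p + 2)))⁻¹ ≤ ((2:ℝ≥0∞)⁻¹)⁻¹ :=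
                    ENNReal.inv_le_inv' h12
                _ = 2 := inv_inv _
    _ ≤ ENNReal.ofReal ((2 ^ m * Λ + 2 * (a ^ m * Λ * 2 ^ (2 * (p + 5))) + 1) * ε ^ 2) := by
        rw [show (2:ℝ≥0∞) = ENNReal.ofReal 2 from by norm_num,
          ← ENNReal.ofReal_mul (by positivity),
          ← ENNReal.ofReal_add (by positivity) (by positivity)]
        apply ENNReal.ofReal_le_ofReal
        nlinarith [sq_nonneg ε,
          mul_nonneg (mul_nonneg (pow_nonneg ha.le m) hΛ)
            (pow_nonneg (by norm_num : (0:ℝ) ≤ 2) (2 * (p + 5)))]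
end
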